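/- arXiv:1011.1701 — 4 statements merged into one kernel-verified Lean document; each statement's English description precedes it below -/
import Mathlib

section
/- Under the variable–variable block of covariance evolution with its initial conditions, for all k, s ∈ L and all y ∈ (0,1] one has δ^{l_k,l_s}(y) = −(k s l̂_k l̂_s / e²) F + (ε l̂_k l̂_s / e)[k(y^s−1) + s(y^k−1)] + 1_{k=s} · k l̂_k (1 − ε y^k). (Theorem 1, equation (1).) -/
open Finset

namespace LDPC

/-- λ(y) = Σ_{k∈L} λ_k y^{k-1} -/
noncomputable def lamP (L : Finset ℕ) (lam : ℕ → ℝ) (y : ℝ) : ℝ :=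
  ∑ k ∈ L, lam k * y ^ (k - 1)

/-- λ'(y) = Σ_{k∈L} (k-1) λ_k y^{k-2} -/
noncomputable def lamD (L : Finset ℕ) (lam : ℕ → ℝ) (y : ℝ) : ℝ :=
  ∑ k ∈ L, ((k : ℝ) - 1) * lam k * y ^ (k - 2)

/-- λ''(y) = Σ_{k∈L} (k-1)(k-2) λ_k y^{k-3} -/
noncomputable def lamDD (L : Finset ℕ) (lam : ℕ → ℝ) (y : ℝ) : ℝ :=
  ∑ k ∈ L, ((k : ℝ) - 1) * ((k : ℝ) - 2) * lam k * y ^ (k - 3)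

/-- ρ(z) = Σ_{k∈R} ρ_k z^{k-1} -/
noncomputable def rhoP (R : Finset ℕ) (rho : ℕ → ℝ) (z : ℝ) : ℝ :=
  ∑ k ∈ R, rho k * z ^ (k - 1)

/-- ρ'(z) = Σ_{k∈R} (k-1) ρ_k z^{k-2} -/
noncomputable def rhoD (R : Finset ℕ) (rho : ℕ → ℝ) (z : ℝ) : ℝ :=
  ∑ k ∈ R, ((k : ℝ) - 1) * rho k * z ^ (k - 2)

/-- x = ελ(y) -/
noncomputable def xF (L : Finset ℕ) (lam : ℕ → ℝ) (ε y : ℝ) : ℝ := ε * lamP L lam y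

/-- x' = ελ'(y) -/
noncomputable def xD (L : Finset ℕ) (lam : ℕ → ℝ) (ε y : ℝ) : ℝ := ε * lamD L lam y

/-- x'' = ελ''(y) -/
noncomputable def xDD (L : Finset ℕ) (lam : ℕ → ℝ) (ε y : ℝ) : ℝ := ε * lamDD L lam y

/-- e = xy -/
noncomputable def eF (L : Finset ℕ) (lam : ℕ → ℝ) (ε y : ℝ) : ℝ := xF L lam ε y * y

/-- a = (x'y + x)/x -/
noncomputable def aF (L : Finset ℕ) (lam : ℕ → ℝ) (ε y : ℝ) : ℝ :=
  (xD L lam ε y * y + xF L lam ε y) / xF L lam ε y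

/-- l̂_k(y) = ε λ_k y^k -/
noncomputable def lhat (lam : ℕ → ℝ) (ε : ℝ) (k : ℕ) (y : ℝ) : ℝ := ε * lam k * y ^ k

/-- r̂_j(y); for j = 1 the special formula x(y-1+ρ(1-x)), else Σ_{i∈R} ρ_i C(i-1,j-1) x^j (1-x)^{i-j}. -/
noncomputable def rhat (L R : Finset ℕ) (lam rho : ℕ → ℝ) (ε : ℝ) (j : ℕ) (y : ℝ) : ℝ :=
  if j = 1 then xF L lam ε y * (y - 1 + rhoP R rho (1 - xF L lam ε y))
  else ∑ i ∈ R, rho i * ((i - 1).choose (j - 1) : ℝ) * xF L lam ε y ^ j *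
    (1 - xF L lam ε y) ^ (i - j)

/-- G_j(y) = j(r̂_{j+1} - r̂_j)/x for j ≤ d_c - 1, and G_{d_c}(y) = -d_c r̂_{d_c}/x. -/
noncomputable def Gf (L R : Finset ℕ) (lam rho : ℕ → ℝ) (ε : ℝ) (dc j : ℕ) (y : ℝ) : ℝ :=
  if j = dc then -((dc : ℝ) * rhat L R lam rho ε dc y) / xF L lam ε y
  else (j : ℝ) * (rhat L R lam rho ε (j + 1) y - rhat L R lam rho ε j y) / xF L lam ε y

/-- F(y) = Σ_{k∈L} (λ_k/k)[ε²(y^k-1)² + ε(y^k-1)] -/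
noncomputable def Ff (L : Finset ℕ) (lam : ℕ → ℝ) (ε y : ℝ) : ℝ :=
  ∑ k ∈ L, lam k / (k : ℝ) * (ε ^ 2 * (y ^ k - 1) ^ 2 + ε * (y ^ k - 1))

/-- F'(y) = 2Σ_{k∈L} ε²λ_k y^{2k-1} - (ε - ε̃)x -/
noncomputable def Fd (L : Finset ℕ) (lam : ℕ → ℝ) (ε y : ℝ) : ℝ :=
  2 * ∑ k ∈ L, ε ^ 2 * lam k * y ^ (2 * k - 1) - (ε - (1 - ε)) * xF L lam ε y

/-- V_{i,j}(y) = Σ_{s∈R} sρ_s C(s-1,i-1)C(s-1,j-1) x^{i+j} (1-x)^{2s-i-j} -/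
noncomputable def Vf (L R : Finset ℕ) (lam rho : ℕ → ℝ) (ε : ℝ) (i j : ℕ) (y : ℝ) : ℝ :=
  ∑ s ∈ R, (s : ℝ) * rho s * ((s - 1).choose (i - 1) : ℝ) * ((s - 1).choose (j - 1) : ℝ) *
    xF L lam ε y ^ (i + j) * (1 - xF L lam ε y) ^ (2 * s - i - j)

/-- The variable–variable block of covariance evolution, with its initial conditions. -/
def CEvv (L : Finset ℕ) (lam : ℕ → ℝ) (ε : ℝ) (δll : ℕ → ℕ → ℝ → ℝ) : Prop :=
  (∀ k ∈ L, ∀ s ∈ L, ∀ y ∈ Set.Ioc (0 : ℝ) 1,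
    HasDerivWithinAt (δll k s)
      (-(xF L lam ε y) *
          (((s : ℝ) * lhat lam ε s y / eF L lam ε y ^ 2) * ∑ t ∈ L, δll k t y
            + ((k : ℝ) * lhat lam ε k y / eF L lam ε y ^ 2) * ∑ t ∈ L, δll s t y
            - (((k : ℝ) + (s : ℝ)) / eF L lam ε y) * δll k s y)
        - xF L lam ε y * (k : ℝ) * (s : ℝ) * (lhat lam ε k y / eF L lam ε y) *
            ((if k = s then (1 : ℝ) else 0) - lhat lam ε s y / eF L lam ε y))
      (Set.Ioc 0 1) y)
  ∧ ∀ k ∈ L, ∀ s ∈ L,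
      δll k s 1 = (if k = s then (1 : ℝ) else 0) * (k : ℝ) * lam k * ε * (1 - ε)

/-- The variable–check block of covariance evolution, with its initial conditions. -/
def CEvc (L R : Finset ℕ) (lam rho : ℕ → ℝ) (ε : ℝ) (dc : ℕ)
    (δll δlr : ℕ → ℕ → ℝ → ℝ) : Prop :=
  (∀ k ∈ L, ∀ j ∈ Finset.Icc 1 (dc - 1), ∀ y ∈ Set.Ioc (0 : ℝ) 1,
    HasDerivWithinAt (δlr k j)
      (2 * (xD L lam ε y / eF L lam ε y) * Gf L R lam rho ε dc j y * ∑ t ∈ L, δll k t y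
        - (Gf L R lam rho ε dc j y / y ^ 2) * ∑ i ∈ L, ((i : ℝ) - 1) * δll k i y
        - xF L lam ε y * (aF L lam ε y - (k : ℝ)) * ((k : ℝ) * lhat lam ε k y / eF L lam ε y)
            * (Gf L R lam rho ε dc j y / y)
        - ((k : ℝ) * lhat lam ε k y / (eF L lam ε y * y)) * ∑ t ∈ L, δlr t j y
        + ((k : ℝ) / y) * δlr k j y
        - (j : ℝ) * (xD L lam ε y / xF L lam ε y) *
            ((if j + 1 = dc then
                (∑ t ∈ L, δll k t y) - ∑ j' ∈ Finset.Icc 1 (dc - 1), δlr k j' y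
              else δlr k (j + 1) y) - δlr k j y))
      (Set.Ioc 0 1) y)
  ∧ ∀ k ∈ L, ∀ j ∈ Finset.Icc 1 (dc - 1),
      δlr k j 1 = -((k : ℝ) * lam k * ε * (1 - ε)) * Gf L R lam rho ε dc j 1

/-- The check–check block of covariance evolution, with symmetry and initial conditions. -/
def CErr (L R : Finset ℕ) (lam rho : ℕ → ℝ) (ε : ℝ) (dc : ℕ)
    (δlr δrr : ℕ → ℕ → ℝ → ℝ) : Prop :=
  (∀ i ∈ Finset.Icc 1 (dc - 1), ∀ j ∈ Finset.Icc 1 (dc - 1), ∀ y ∈ Set.Ioc (0 : ℝ) 1,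
      δrr i j y = δrr j i y)
  ∧ (∀ i ∈ Finset.Icc 1 (dc - 1), ∀ j ∈ Finset.Icc 1 (dc - 1), ∀ y ∈ Set.Ioc (0 : ℝ) 1,
    HasDerivWithinAt (δrr i j)
      (-(xD L lam ε y / xF L lam ε y) *
          ((i : ℝ) * (if i + 1 = dc then
                (∑ k ∈ L, δlr k j y) - ∑ i' ∈ Finset.Icc 1 (dc - 1), δrr i' j y
              else δrr (i + 1) j y)
            + (j : ℝ) * (if j + 1 = dc then
                (∑ k ∈ L, δlr k i y) - ∑ i' ∈ Finset.Icc 1 (dc - 1), δrr i' i y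
              else δrr (j + 1) i y)
            - ((i : ℝ) + (j : ℝ)) * δrr i j y)
        + (∑ k ∈ L, ((2 * aF L lam ε y - (k : ℝ) - 1) / y ^ 2) *
            (δlr k j y * Gf L R lam rho ε dc i y + δlr k i y * Gf L R lam rho ε dc j y))
        - xF L lam ε y *
            (((xDD L lam ε y * xF L lam ε y - xD L lam ε y ^ 2) / xF L lam ε y ^ 2) *
                Gf L R lam rho ε dc i y * Gf L R lam rho ε dc j y
              + (i : ℝ) * (j : ℝ) * (xD L lam ε y / xF L lam ε y ^ 2) *
                  ((if i = j then rhat L R lam rho ε (j + 1) y + rhat L R lam rho ε j y else 0)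
                    - (if i = j + 1 then rhat L R lam rho ε i y else 0)
                    - (if j = i + 1 then rhat L R lam rho ε j y else 0))))
      (Set.Ioc 0 1) y)
  ∧ ∀ i ∈ Finset.Icc 1 (dc - 1), ∀ j ∈ Finset.Icc 1 (dc - 1),
      δrr i j 1 = (if i = j then (i : ℝ) * rhat L R lam rho ε i 1 else 0)
        - Vf L R lam rho ε i j 1
        + (∑ k ∈ L, ((k : ℝ) - 1) * lam k) * ε * (1 - ε) *
            Gf L R lam rho ε dc i 1 * Gf L R lam rho ε dc j 1

/-! helpers -/

noncomputable def LamT (L : Finset ℕ) (lam : ℕ → ℝ) (y : ℝ) : ℝ := ∑ t ∈ L, lam t * y ^ t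
noncomputable def Lam1T (L : Finset ℕ) (lam : ℕ → ℝ) (y : ℝ) : ℝ := ∑ t ∈ L, (t : ℝ) * lam t * y ^ t
noncomputable def ST (L : Finset ℕ) (lam : ℕ → ℝ) (y : ℝ) : ℝ := ∑ t ∈ L, lam t * y ^ t * (y ^ t - 1)

noncomputable def gfun (L : Finset ℕ) (lam : ℕ → ℝ) (ε : ℝ) (k s : ℕ) (y : ℝ) : ℝ :=
  -((k : ℝ) * (s : ℝ) * (lam k * y ^ k) * (lam s * y ^ s) / LamT L lam y ^ 2) * Ff L lam ε y
  + ε ^ 2 * (lam k * y ^ k) * (lam s * y ^ s) / LamT L lam y *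
      ((k : ℝ) * (y ^ s - 1) + (s : ℝ) * (y ^ k - 1))
  + (if k = s then (1 : ℝ) else 0) * (k : ℝ) * ε * (lam k * y ^ k) * (1 - ε * y ^ k)

lemma gfun_one (L : Finset ℕ) (lam : ℕ → ℝ) (ε : ℝ) (k s : ℕ) :
    gfun L lam ε k s 1 = (if k = s then (1 : ℝ) else 0) * (k : ℝ) * lam k * ε * (1 - ε) := by
  simp [gfun, Ff]
  split_ifs <;> ring

lemma lamP_mul (L : Finset ℕ) (lam : ℕ → ℝ) (hL1 : ∀ t ∈ L, 1 ≤ t) (y : ℝ) :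
    lamP L lam y * y = LamT L lam y := by
  unfold lamP LamT
  rw [Finset.sum_mul]
  refine Finset.sum_congr rfl fun t ht => ?_
  rw [mul_assoc, ← pow_succ, Nat.sub_add_cancel (hL1 t ht)]

lemma LamT_pos (L : Finset ℕ) (lam : ℕ → ℝ) (hL : L.Nonempty)
    (hlamPos : ∀ k ∈ L, 0 < lam k) {y : ℝ} (hy : 0 < y) : 0 < LamT L lam y :=
  Finset.sum_pos (fun t ht => mul_pos (hlamPos t ht) (pow_pos hy t)) hL

lemma hasDW_mono (c : ℝ) {t : ℕ} (ht : 1 ≤ t) {y : ℝ} (hy : y ≠ 0) (s : Set ℝ) :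
    HasDerivWithinAt (fun z => c * z ^ t) ((t : ℝ) * (c * y ^ t) / y) s y := by
  have h := ((hasDerivAt_pow t y).const_mul c).hasDerivWithinAt (s := s)
  refine h.congr_deriv ?_; symm
  have h1 : y ^ (t - 1) * y = y ^ t := by rw [← pow_succ, Nat.sub_add_cancel ht]
  rw [div_eq_iff hy]
  calc (t : ℝ) * (c * y ^ t) = c * ((t : ℝ) * (y ^ (t - 1) * y)) := by rw [h1]; ring
  _ = c * ((t : ℝ) * y ^ (t - 1)) * y := by ring

lemma hasDW_pow {t : ℕ} (ht : 1 ≤ t) {y : ℝ} (hy : y ≠ 0) (s : Set ℝ) :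
    HasDerivWithinAt (fun z : ℝ => z ^ t) ((t : ℝ) * y ^ t / y) s y := by
  have h := hasDW_mono 1 ht hy s
  simpa using h

lemma hasDW_LamT (L : Finset ℕ) (lam : ℕ → ℝ) (hL1 : ∀ t ∈ L, 1 ≤ t) {y : ℝ} (hy : y ≠ 0)
    (s : Set ℝ) : HasDerivWithinAt (LamT L lam) (Lam1T L lam y / y) s y := by
  have h : HasDerivWithinAt (fun z => ∑ t ∈ L, lam t * z ^ t)
      (∑ t ∈ L, (t : ℝ) * (lam t * y ^ t) / y) s y :=
    HasDerivWithinAt.fun_sum (fun t ht => hasDW_mono (lam t) (hL1 t ht) hy s)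
  refine h.congr_deriv ?_; symm
  rw [Lam1T, Finset.sum_div]
  exact Finset.sum_congr rfl fun t _ => by ring

lemma hasDW_Ff (L : Finset ℕ) (lam : ℕ → ℝ) (ε : ℝ) (hL1 : ∀ t ∈ L, 1 ≤ t) {y : ℝ}
    (hy : y ≠ 0) (s : Set ℝ) :
    HasDerivWithinAt (Ff L lam ε)
      ((2 * ε ^ 2 * ST L lam y + ε * LamT L lam y) / y) s y := by
  have h : ∀ t ∈ L, HasDerivWithinAt
      (fun z => lam t / (t : ℝ) * (ε ^ 2 * (z ^ t - 1) ^ 2 + ε * (z ^ t - 1)))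
      ((2 * ε ^ 2 * (lam t * y ^ t * (y ^ t - 1)) + ε * (lam t * y ^ t)) / y) s y := by
    intro t ht
    have htR : ((t : ℝ)) ≠ 0 := by
      have := hL1 t ht; positivity
    have hb : HasDerivWithinAt (fun z : ℝ => z ^ t - 1) ((t : ℝ) * y ^ t / y) s y :=
      (hasDW_pow (hL1 t ht) hy s).sub_const 1
    have hsq := hb.pow 2
    have h2 := ((hsq.const_mul (ε ^ 2)).add (hb.const_mul ε)).const_mul (lam t / (t : ℝ))
    refine h2.congr_deriv ?_; symm
    push_cast
    field_simp
  have hsum := HasDerivWithinAt.fun_sum h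
  have heq : (2 * ε ^ 2 * ST L lam y + ε * LamT L lam y) / y
      = ∑ t ∈ L, (2 * ε ^ 2 * (lam t * y ^ t * (y ^ t - 1)) + ε * (lam t * y ^ t)) / y := by
    rw [ST, LamT, Finset.mul_sum, Finset.mul_sum, ← Finset.sum_add_distrib, Finset.sum_div]
  unfold Ff
  rw [heq]
  exact hsum

lemma sumg (L : Finset ℕ) (lam : ℕ → ℝ) (ε : ℝ) {k : ℕ} (hk : k ∈ L) (y : ℝ) :
    ∑ t ∈ L, gfun L lam ε k t y
      = -((k : ℝ) * (lam k * y ^ k) / LamT L lam y ^ 2 * Ff L lam ε y) * Lam1T L lam y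
        + ε ^ 2 * (lam k * y ^ k) / LamT L lam y *
            ((k : ℝ) * ST L lam y + Lam1T L lam y * (y ^ k - 1))
        + (k : ℝ) * ε * (lam k * y ^ k) * (1 - ε * y ^ k) := by
  have h : ∀ t ∈ L, gfun L lam ε k t y
      = (-((k : ℝ) * (lam k * y ^ k) / LamT L lam y ^ 2 * Ff L lam ε y)) *
            ((t : ℝ) * lam t * y ^ t)
        + ((ε ^ 2 * (lam k * y ^ k) / LamT L lam y * (k : ℝ)) * (lam t * y ^ t * (y ^ t - 1))
        + (ε ^ 2 * (lam k * y ^ k) / LamT L lam y * (y ^ k - 1)) * ((t : ℝ) * lam t * y ^ t))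
        + (if k = t then (k : ℝ) * ε * (lam k * y ^ k) * (1 - ε * y ^ k) else 0) := by
    intro t ht
    unfold gfun
    split_ifs <;> ring
  rw [Finset.sum_congr rfl h, Finset.sum_add_distrib, Finset.sum_add_distrib,
    Finset.sum_add_distrib, ← Finset.mul_sum, ← Finset.mul_sum, ← Finset.mul_sum,
    Finset.sum_ite_eq, if_pos hk]
  unfold Lam1T ST
  ring

set_option maxHeartbeats 2000000 in
lemma hasDW_gfun (L : Finset ℕ) (lam : ℕ → ℝ) (ε : ℝ) (hL : L.Nonempty)
    (hlamPos : ∀ t ∈ L, 0 < lam t) (hL1 : ∀ t ∈ L, 1 ≤ t) (hε : ε ≠ 0)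
    {k s : ℕ} (hk : k ∈ L) (hs : s ∈ L) {y : ℝ} (hy : y ∈ Set.Ioc (0 : ℝ) 1) :
    HasDerivWithinAt (gfun L lam ε k s)
      (-(xF L lam ε y) *
          (((s : ℝ) * lhat lam ε s y / eF L lam ε y ^ 2) * ∑ t ∈ L, gfun L lam ε k t y
            + ((k : ℝ) * lhat lam ε k y / eF L lam ε y ^ 2) * ∑ t ∈ L, gfun L lam ε s t y
            - (((k : ℝ) + (s : ℝ)) / eF L lam ε y) * gfun L lam ε k s y)
        - xF L lam ε y * (k : ℝ) * (s : ℝ) * (lhat lam ε k y / eF L lam ε y) *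
            ((if k = s then (1 : ℝ) else 0) - lhat lam ε s y / eF L lam ε y))
      (Set.Ioc 0 1) y := by
  obtain ⟨hy0, hy1⟩ := hy
  have hyne : y ≠ 0 := ne_of_gt hy0
  have hA : 0 < LamT L lam y := LamT_pos L lam hL hlamPos hy0
  have hAne : LamT L lam y ≠ 0 := ne_of_gt hA
  have hxP : lamP L lam y = LamT L lam y / y := by
    rw [eq_div_iff hyne, lamP_mul L lam hL1]
  have hdk := hasDW_mono (lam k) (hL1 k hk) hyne (Set.Ioc 0 1)
  have hds := hasDW_mono (lam s) (hL1 s hs) hyne (Set.Ioc 0 1)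
  have hA' := hasDW_LamT L lam hL1 hyne (Set.Ioc 0 1)
  have hA2 := hA'.fun_pow 2
  have hF' := hasDW_Ff L lam ε hL1 hyne (Set.Ioc 0 1)
  have hpk := hasDW_pow (hL1 k hk) hyne (Set.Ioc 0 1)
  have hps := hasDW_pow (hL1 s hs) hyne (Set.Ioc 0 1)
  have h1 := ((((hdk.const_mul ((k : ℝ) * (s : ℝ))).fun_mul hds).fun_div hA2
      (pow_ne_zero 2 hAne)).fun_neg).fun_mul hF'
  have hlin := ((hps.sub_const 1).const_mul (k : ℝ)).fun_add
      ((hpk.sub_const 1).const_mul (s : ℝ))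
  have h2 := (((hdk.const_mul (ε ^ 2)).fun_mul hds).fun_div hA' hAne).fun_mul hlin
  have h3 := (hdk.const_mul ((if k = s then (1 : ℝ) else 0) * (k : ℝ) * ε)).fun_mul
      ((hpk.const_mul ε).const_sub 1)
  have hall := (h1.fun_add h2).fun_add h3
  have hfun : (fun z => -((k : ℝ) * (s : ℝ) * (lam k * z ^ k) * (lam s * z ^ s) /
        LamT L lam z ^ 2) * Ff L lam ε z
      + ε ^ 2 * (lam k * z ^ k) * (lam s * z ^ s) / LamT L lam z *
          ((k : ℝ) * (z ^ s - 1) + (s : ℝ) * (z ^ k - 1))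
      + (if k = s then (1 : ℝ) else 0) * (k : ℝ) * ε * (lam k * z ^ k) * (1 - ε * z ^ k))
      = gfun L lam ε k s := by
    funext z; rw [gfun]
  rw [hfun] at hall
  refine hall.congr_deriv ?_; symm
  rw [sumg L lam ε hk y, sumg L lam ε hs y]
  simp only [lhat, eF, xF, gfun]
  rw [hxP]
  push_cast
  rcases eq_or_ne k s with h | h
  · subst h
    simp only [if_pos rfl]
    field_simp
    ring
  · simp only [if_neg h]
    field_simp
    ring

theorem statement_0'
    (L : Finset ℕ) (hL : L.Nonempty)
    (hL2 : ∀ k ∈ L, 2 ≤ k)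
    (lam : ℕ → ℝ)
    (hlamPos : ∀ k ∈ L, 0 < lam k)
    (ε : ℝ) (hε : ε ∈ Set.Ioo (0 : ℝ) 1)
    (δll : ℕ → ℕ → ℝ → ℝ)
    (hODE : ∀ k ∈ L, ∀ s ∈ L, ∀ y ∈ Set.Ioc (0 : ℝ) 1,
      HasDerivWithinAt (δll k s)
        (-(xF L lam ε y) *
            (((s : ℝ) * lhat lam ε s y / eF L lam ε y ^ 2) * ∑ t ∈ L, δll k t y
              + ((k : ℝ) * lhat lam ε k y / eF L lam ε y ^ 2) * ∑ t ∈ L, δll s t y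
              - (((k : ℝ) + (s : ℝ)) / eF L lam ε y) * δll k s y)
          - xF L lam ε y * (k : ℝ) * (s : ℝ) * (lhat lam ε k y / eF L lam ε y) *
              ((if k = s then (1 : ℝ) else 0) - lhat lam ε s y / eF L lam ε y))
        (Set.Ioc 0 1) y)
    (hIC : ∀ k ∈ L, ∀ s ∈ L,
      δll k s 1 = (if k = s then (1 : ℝ) else 0) * (k : ℝ) * lam k * ε * (1 - ε)) :
    ∀ k ∈ L, ∀ s ∈ L, ∀ a ∈ Set.Ioc (0 : ℝ) 1, δll k s a = gfun L lam ε k s a := by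
  have hε0 : (0 : ℝ) < ε := hε.1
  have hεne : ε ≠ 0 := ne_of_gt hε0
  have hL1 : ∀ t ∈ L, 1 ≤ t := fun t ht => le_trans one_le_two (hL2 t ht)
  have hIC' : ∀ p ∈ L ×ˢ L, δll p.1 p.2 1 - gfun L lam ε p.1 p.2 1 = 0 := by
    intro p hp
    obtain ⟨h1, h2⟩ := Finset.mem_product.mp hp
    rw [hIC p.1 h1 p.2 h2, gfun_one]
    ring
  intro k hk s hs a ha
  rcases eq_or_lt_of_le ha.2 with h1 | ha1
  · have := hIC' (k, s) (Finset.mem_product.mpr ⟨hk, hs⟩)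
    simp only [h1]
    linarith [this]
  -- main case : a < 1
  have ha0 : 0 < a := ha.1
  set d : ℕ × ℕ → ℝ → ℝ := fun p z => δll p.1 p.2 z - gfun L lam ε p.1 p.2 z with hd_def
  set N : ℝ → ℝ := fun z => ∑ p ∈ L ×ˢ L, d p z ^ 2 with hN_def
  set K : ℝ := ((L.max' hL : ℕ) : ℝ) with hK_def
  have hK2 : (2 : ℝ) ≤ K := by rw [hK_def]; exact_mod_cast hL2 _ (L.max'_mem hL)
  have hKpos : (0 : ℝ) < K := by linarith
  have hKb : ∀ t ∈ L, (t : ℝ) ≤ K := fun t ht => by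
    rw [hK_def]; exact_mod_cast L.le_max' t ht
  set C0 : ℝ := 4 * K / a with hC0_def
  have hC0pos : 0 < C0 := by positivity
  set C : ℝ := 2 * C0 * ((L ×ˢ L).card : ℝ) with hC_def
  set Φ : ℕ × ℕ → ℝ → ℝ := fun p z =>
    -(xF L lam ε z) *
        (((p.2 : ℝ) * lhat lam ε p.2 z / eF L lam ε z ^ 2) * ∑ w ∈ L, d (p.1, w) z
          + ((p.1 : ℝ) * lhat lam ε p.1 z / eF L lam ε z ^ 2) * ∑ w ∈ L, d (p.2, w) z
          - (((p.1 : ℝ) + (p.2 : ℝ)) / eF L lam ε z) * d p z) with hΦ_def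
  -- derivative of d
  have hdp : ∀ p ∈ L ×ˢ L, ∀ z ∈ Set.Ioc (0 : ℝ) 1,
      HasDerivWithinAt (d p) (Φ p z) (Set.Ioc 0 1) z := by
    intro p hp z hz
    obtain ⟨hp1, hp2⟩ := Finset.mem_product.mp hp
    have h1 := hODE p.1 hp1 p.2 hp2 z hz
    have h2 := hasDW_gfun L lam ε hL hlamPos hL1 hεne hp1 hp2 hz
    have h3 := h1.sub h2
    refine h3.congr_deriv ?_; symm
    simp only [hΦ_def, hd_def]
    rw [Finset.sum_sub_distrib, Finset.sum_sub_distrib]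
    ring
  -- bound on Φ
  have hΦbound : ∀ p ∈ L ×ˢ L, ∀ z ∈ Set.Icc a 1,
      |Φ p z| ≤ C0 * ∑ q ∈ L ×ˢ L, |d q z| := by
    intro p hp z hz
    obtain ⟨hp1, hp2⟩ := Finset.mem_product.mp hp
    have hz0 : 0 < z := lt_of_lt_of_le ha0 hz.1
    have hzne : z ≠ 0 := ne_of_gt hz0
    have hA : 0 < LamT L lam z := LamT_pos L lam hL hlamPos hz0
    have hAne : LamT L lam z ≠ 0 := ne_of_gt hA
    have hzP : lamP L lam z = LamT L lam z / z := by
      rw [eq_div_iff hzne, lamP_mul L lam hL1]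
    have hcoef : ∀ u : ℕ, xF L lam ε z * ((u : ℝ) * lhat lam ε u z / eF L lam ε z ^ 2)
        = (u : ℝ) * (lam u * z ^ u) / (LamT L lam z * z) := by
      intro u
      simp only [lhat, eF, xF]
      rw [hzP]
      field_simp
    have hcoef3 : xF L lam ε z * (((p.1 : ℝ) + (p.2 : ℝ)) / eF L lam ε z)
        = ((p.1 : ℝ) + (p.2 : ℝ)) / z := by
      simp only [eF, xF]
      rw [hzP]
      field_simp
    have e1 : Φ p z =
        -((xF L lam ε z * ((p.2 : ℝ) * lhat lam ε p.2 z / eF L lam ε z ^ 2)) *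
            (∑ w ∈ L, d (p.1, w) z)
          + (xF L lam ε z * ((p.1 : ℝ) * lhat lam ε p.1 z / eF L lam ε z ^ 2)) *
            (∑ w ∈ L, d (p.2, w) z)
          - (xF L lam ε z * (((p.1 : ℝ) + (p.2 : ℝ)) / eF L lam ε z)) * d p z) := by
      simp only [hΦ_def]; ring
    rw [e1, hcoef p.2, hcoef p.1, hcoef3]
    set T := ∑ q ∈ L ×ˢ L, |d q z| with hT_def
    have hTnn : 0 ≤ T := Finset.sum_nonneg fun q _ => abs_nonneg _
    have hsingle : ∀ u ∈ L, lam u * z ^ u ≤ LamT L lam z := by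
      intro u hu
      exact Finset.single_le_sum (f := fun t => lam t * z ^ t)
        (fun t ht => le_of_lt (mul_pos (hlamPos t ht) (pow_pos hz0 t))) hu
    have hcb : ∀ u ∈ L, (u : ℝ) * (lam u * z ^ u) / (LamT L lam z * z) ≤ K / a := by
      intro u hu
      rw [div_le_div_iff₀ (mul_pos hA hz0) ha0]
      have h1 : (u : ℝ) * (lam u * z ^ u) ≤ K * LamT L lam z :=
        mul_le_mul (hKb u hu) (hsingle u hu)
          (le_of_lt (mul_pos (hlamPos u hu) (pow_pos hz0 u))) (le_of_lt hKpos)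
      calc (u : ℝ) * (lam u * z ^ u) * a ≤ K * LamT L lam z * z :=
            mul_le_mul h1 hz.1 (le_of_lt ha0)
              (le_of_lt (mul_pos hKpos hA))
        _ = K * (LamT L lam z * z) := by ring
    have hc3b : ((p.1 : ℝ) + (p.2 : ℝ)) / z ≤ 2 * K / a := by
      rw [div_le_div_iff₀ hz0 ha0]
      have h1 : (p.1 : ℝ) + (p.2 : ℝ) ≤ 2 * K := by
        have := hKb p.1 hp1; have := hKb p.2 hp2; linarith
      calc ((p.1 : ℝ) + (p.2 : ℝ)) * a ≤ 2 * K * z := by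
            apply mul_le_mul h1 hz.1 (le_of_lt ha0); positivity
        _ = _ := by ring
    have hsubsum : ∀ t ∈ L, ∑ w ∈ L, |d (t, w) z| ≤ T := by
      intro t ht
      calc ∑ w ∈ L, |d (t, w) z| = ∑ q ∈ {t} ×ˢ L, |d q z| := by
            rw [Finset.sum_product, Finset.sum_singleton]
        _ ≤ T := Finset.sum_le_sum_of_subset_of_nonneg
            (Finset.product_subset_product_left (Finset.singleton_subset_iff.mpr ht))
            (fun q _ _ => abs_nonneg _)
    have hS1 : |∑ w ∈ L, d (p.1, w) z| ≤ T :=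
      le_trans (Finset.abs_sum_le_sum_abs _ _) (hsubsum p.1 hp1)
    have hS2 : |∑ w ∈ L, d (p.2, w) z| ≤ T :=
      le_trans (Finset.abs_sum_le_sum_abs _ _) (hsubsum p.2 hp2)
    have hdT : |d p z| ≤ T := by
      have := Finset.single_le_sum (f := fun q => |d q z|) (fun q _ => abs_nonneg _) hp
      simpa [hT_def] using this
    have hcnn1 : (0 : ℝ) ≤ (p.2 : ℝ) * (lam p.2 * z ^ p.2) / (LamT L lam z * z) := by
      apply div_nonneg _ (le_of_lt (mul_pos hA hz0))
      exact mul_nonneg (Nat.cast_nonneg _)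
        (mul_nonneg (le_of_lt (hlamPos _ hp2)) (le_of_lt (pow_pos hz0 _)))
    have hcnn2 : (0 : ℝ) ≤ (p.1 : ℝ) * (lam p.1 * z ^ p.1) / (LamT L lam z * z) := by
      apply div_nonneg _ (le_of_lt (mul_pos hA hz0))
      exact mul_nonneg (Nat.cast_nonneg _)
        (mul_nonneg (le_of_lt (hlamPos _ hp1)) (le_of_lt (pow_pos hz0 _)))
    have hcnn3 : (0 : ℝ) ≤ ((p.1 : ℝ) + (p.2 : ℝ)) / z := by positivity
    set A1 := (p.2 : ℝ) * (lam p.2 * z ^ p.2) / (LamT L lam z * z) * ∑ w ∈ L, d (p.1, w) z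
    set A2 := (p.1 : ℝ) * (lam p.1 * z ^ p.1) / (LamT L lam z * z) * ∑ w ∈ L, d (p.2, w) z
    set A3 := ((p.1 : ℝ) + (p.2 : ℝ)) / z * d p z
    have htri : |-(A1 + A2 - A3)| ≤ |A1| + |A2| + |A3| := by
      rw [abs_neg, sub_eq_add_neg]
      calc |A1 + A2 + -A3| ≤ |A1 + A2| + |-A3| := abs_add_le _ _
        _ ≤ |A1| + |A2| + |A3| := by
            rw [abs_neg]; exact add_le_add (abs_add_le _ _) le_rfl
    refine le_trans htri ?_
    have hA1 : |A1| ≤ (K / a) * T := by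
      rw [abs_mul, abs_of_nonneg hcnn1]
      exact mul_le_mul (hcb p.2 hp2) hS1 (abs_nonneg _) (by positivity)
    have hA2 : |A2| ≤ (K / a) * T := by
      rw [abs_mul, abs_of_nonneg hcnn2]
      exact mul_le_mul (hcb p.1 hp1) hS2 (abs_nonneg _) (by positivity)
    have hA3 : |A3| ≤ (2 * K / a) * T := by
      rw [abs_mul, abs_of_nonneg hcnn3]
      exact mul_le_mul hc3b hdT (abs_nonneg _) (by positivity)
    have : C0 * T = (K / a) * T + (K / a) * T + (2 * K / a) * T := by
      rw [hC0_def]; ring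
    linarith
  -- derivative of N at interior points
  have hNderiv : ∀ z ∈ Set.Ioo a 1,
      HasDerivAt N (∑ p ∈ L ×ˢ L, 2 * d p z * Φ p z) z := by
    intro z hz
    have hz' : z ∈ Set.Ioc (0 : ℝ) 1 := ⟨lt_trans ha0 hz.1, le_of_lt hz.2⟩
    have hmem : Set.Ioc (0 : ℝ) 1 ∈ nhds z := Ioc_mem_nhds (lt_trans ha0 hz.1) hz.2
    have h : ∀ p ∈ L ×ˢ L, HasDerivAt (fun w => d p w ^ 2) (2 * d p z * Φ p z) z := by
      intro p hp
      have h0 := ((hdp p hp z hz').hasDerivAt hmem).fun_pow 2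
      refine h0.congr_deriv ?_; symm
      push_cast
      ring
    exact HasDerivAt.fun_sum h
  -- monotonicity of M
  set M : ℝ → ℝ := fun z => N z * Real.exp (C * z) with hM_def
  have hdcont : ∀ p ∈ L ×ˢ L, ContinuousOn (d p) (Set.Icc a 1) := by
    intro p hp z hz
    have hz' : z ∈ Set.Ioc (0 : ℝ) 1 := ⟨lt_of_lt_of_le ha0 hz.1, hz.2⟩
    exact ((hdp p hp z hz').continuousWithinAt).mono
      (fun w hw => ⟨lt_of_lt_of_le ha0 hw.1, hw.2⟩)
  have hNcont : ContinuousOn N (Set.Icc a 1) :=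
    continuousOn_finset_sum _ (fun p hp => (hdcont p hp).pow 2)
  have hMcont : ContinuousOn M (Set.Icc a 1) :=
    hNcont.mul ((Real.continuous_exp.comp (continuous_const.mul continuous_id)).continuousOn)
  have hmono : MonotoneOn M (Set.Icc a 1) := by
    apply monotoneOn_of_hasDerivWithinAt_nonneg (convex_Icc a 1) hMcont
      (f' := fun z => ((∑ p ∈ L ×ˢ L, 2 * d p z * Φ p z) + C * N z) * Real.exp (C * z))
    · intro z hz
      rw [interior_Icc] at hz
      have h1 := hNderiv z hz
      have h2 : HasDerivAt (fun w => Real.exp (C * w)) (Real.exp (C * z) * C) z := by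
        simpa using ((hasDerivAt_id z).const_mul C).exp
      have h3 := h1.mul h2
      have h4 : (∑ p ∈ L ×ˢ L, 2 * d p z * Φ p z) * Real.exp (C * z)
          + N z * (Real.exp (C * z) * C)
          = ((∑ p ∈ L ×ˢ L, 2 * d p z * Φ p z) + C * N z) * Real.exp (C * z) := by ring
      rw [h4] at h3
      exact h3.hasDerivWithinAt
    · intro z hz
      rw [interior_Icc] at hz
      have hz' : z ∈ Set.Icc a 1 := ⟨le_of_lt hz.1, le_of_lt hz.2⟩
      have hVb : -(C * N z) ≤ ∑ p ∈ L ×ˢ L, 2 * d p z * Φ p z := by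
        set T := ∑ q ∈ L ×ˢ L, |d q z| with hT_def
        have hTnn : 0 ≤ T := Finset.sum_nonneg fun q _ => abs_nonneg _
        have h1 : ∀ p ∈ L ×ˢ L, -(2 * (C0 * T) * |d p z|) ≤ 2 * d p z * Φ p z := by
          intro p hp
          have hb := hΦbound p hp z hz'
          have h2 : -(d p z * Φ p z) ≤ |d p z| * |Φ p z| := by
            rw [← abs_mul]
            exact neg_le_abs _
          have h3 : |d p z| * |Φ p z| ≤ |d p z| * (C0 * T) :=
            mul_le_mul_of_nonneg_left hb (abs_nonneg _)
          nlinarith [abs_nonneg (d p z)]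
        have h4 : ∑ p ∈ L ×ˢ L, -(2 * (C0 * T) * |d p z|)
            ≤ ∑ p ∈ L ×ˢ L, 2 * d p z * Φ p z := Finset.sum_le_sum h1
        have h5 : ∑ p ∈ L ×ˢ L, -(2 * (C0 * T) * |d p z|) = -(2 * C0 * T * T) := by
          rw [Finset.sum_neg_distrib, ← Finset.mul_sum, ← hT_def]
          ring
        have hcs : T ^ 2 ≤ ((L ×ˢ L).card : ℝ) * N z := by
          have h6 := sq_sum_le_card_mul_sum_sq (s := L ×ˢ L) (f := fun q => |d q z|)
          have h7 : ∑ q ∈ L ×ˢ L, |d q z| ^ 2 = N z := by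
            simp only [hN_def, sq_abs]
          rw [h7] at h6
          exact_mod_cast h6
        have h8 : 2 * C0 * T ^ 2 ≤ 2 * C0 * (((L ×ˢ L).card : ℝ) * N z) :=
          mul_le_mul_of_nonneg_left hcs (by positivity)
        have h9 : C * N z = 2 * C0 * (((L ×ˢ L).card : ℝ) * N z) := by
          rw [hC_def]; ring
        rw [h5] at h4
        nlinarith
      have : 0 ≤ (∑ p ∈ L ×ˢ L, 2 * d p z * Φ p z) + C * N z := by linarith
      exact mul_nonneg this (le_of_lt (Real.exp_pos _))
  -- conclude
  have hN1 : N 1 = 0 := by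
    show (∑ p ∈ L ×ˢ L, d p 1 ^ 2) = 0
    exact Finset.sum_eq_zero fun p hp => by
      rw [show d p 1 = 0 from hIC' p hp]; ring
  have hMle : M a ≤ M 1 :=
    hmono ⟨le_refl a, le_of_lt ha1⟩ ⟨le_of_lt ha1, le_refl 1⟩ (le_of_lt ha1)
  have hM1 : M 1 = 0 := by rw [hM_def]; simp [hN1]
  have hNnn : 0 ≤ N a := Finset.sum_nonneg fun p _ => sq_nonneg _
  have hNa : N a = 0 := by
    have hexp : 0 < Real.exp (C * a) := Real.exp_pos _
    have : N a * Real.exp (C * a) ≤ 0 := by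
      have := hMle; rw [hM1] at this; exact this
    nlinarith
  have hz0 := (Finset.sum_eq_zero_iff_of_nonneg
    (fun p _ => sq_nonneg (d p a))).mp hNa (k, s) (Finset.mem_product.mpr ⟨hk, hs⟩)
  have hd0 : d (k, s) a = 0 := by
    have := sq_eq_zero_iff.mp hz0
    exact this
  have : δll k s a - gfun L lam ε k s a = 0 := hd0
  linarith


theorem statement_0
    (L R : Finset ℕ) (hL : L.Nonempty) (hR : R.Nonempty)
    (hL2 : ∀ k ∈ L, 2 ≤ k) (hR2 : ∀ k ∈ R, 2 ≤ k)
    (lam rho : ℕ → ℝ)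
    (hlamPos : ∀ k ∈ L, 0 < lam k) (hlamSum : ∑ k ∈ L, lam k = 1)
    (hrhoPos : ∀ k ∈ R, 0 < rho k) (hrhoSum : ∑ k ∈ R, rho k = 1)
    (ε : ℝ) (hε : ε ∈ Set.Ioo (0 : ℝ) 1)
    (δll : ℕ → ℕ → ℝ → ℝ) (hvv : CEvv L lam ε δll) :
    ∀ k ∈ L, ∀ s ∈ L, ∀ y ∈ Set.Ioc (0 : ℝ) 1,
      δll k s y =
        -((k : ℝ) * (s : ℝ) * lhat lam ε k y * lhat lam ε s y / eF L lam ε y ^ 2) * Ff L lam ε y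
        + (ε * lhat lam ε k y * lhat lam ε s y / eF L lam ε y) *
            ((k : ℝ) * (y ^ s - 1) + (s : ℝ) * (y ^ k - 1))
        + (if k = s then (1 : ℝ) else 0) * (k : ℝ) * lhat lam ε k y * (1 - ε * y ^ k) := by
  obtain ⟨hODE, hIC⟩ := hvv
  intro k hk s hs y hy
  rw [statement_0' L hL hL2 lam hlamPos ε hε δll hODE hIC k hk s hs y hy]
  have hyne : y ≠ 0 := ne_of_gt hy.1
  have hL1 : ∀ t ∈ L, 1 ≤ t := fun t ht => le_trans one_le_two (hL2 t ht)
  have hA : 0 < LamT L lam y := LamT_pos L lam hL hlamPos hy.1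
  have hAne : LamT L lam y ≠ 0 := ne_of_gt hA
  have hεne : ε ≠ 0 := ne_of_gt hε.1
  have hxP : lamP L lam y = LamT L lam y / y := by
    rw [eq_div_iff hyne, lamP_mul L lam hL1]
  simp only [gfun, lhat, eF, xF]
  rw [hxP]
  rcases eq_or_ne k s with h | h
  · subst h
    simp only [if_pos rfl]
    field_simp
  · simp only [if_neg h]
    field_simp


end LDPC
end

section
/- Under the variable–variable and variable–check blocks of covariance evolution with their initial conditions, for all s ∈ L, j ∈ R̄ and all y ∈ (0,1] one has δ^{l_s,r_j}(y) = [F·(s l̂_s/e) − ε l̂_s (y^s−1)]·((x'/x) G_j − 1_{j=1}) − (s l̂_s/e) G_j ((F'+x)/2 − ε x y^s). (Theorem 1, equation (2).) -/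
open Finset

namespace LDPC

/-! ### Auxiliary material for the proof of `statement_1` -/

/-- T = Σ λ_k y^(2k-1) -/
noncomputable def Tf (L : Finset ℕ) (lam : ℕ → ℝ) (y : ℝ) : ℝ :=
  ∑ k ∈ L, lam k * y ^ (2 * k - 1)

/-- T2 = Σ k λ_k y^(2k-1) -/
noncomputable def T2f (L : Finset ℕ) (lam : ℕ → ℝ) (y : ℝ) : ℝ :=
  ∑ k ∈ L, (k : ℝ) * lam k * y ^ (2 * k - 1)

/-- B = Σ k² λ_k y^(k-1) -/
noncomputable def Bf (L : Finset ℕ) (lam : ℕ → ℝ) (y : ℝ) : ℝ :=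
  ∑ k ∈ L, (k : ℝ) ^ 2 * lam k * y ^ (k - 1)

/-- candidate solution for the variable-variable covariances -/
noncomputable def Dcand (L : Finset ℕ) (lam : ℕ → ℝ) (ε : ℝ) (k s : ℕ) (y : ℝ) : ℝ :=
  (if k = s then (1 : ℝ) else 0) * (k : ℝ) * lhat lam ε k y * (1 - ε * y ^ k)
  - ((k : ℝ) * lhat lam ε k y) * ((s : ℝ) * lhat lam ε s y) / (eF L lam ε y) ^ 2 * Ff L lam ε y
  + ((k : ℝ) * lhat lam ε k y / eF L lam ε y) * (ε * lhat lam ε s y * (y ^ s - 1))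
  + ((s : ℝ) * lhat lam ε s y / eF L lam ε y) * (ε * lhat lam ε k y * (y ^ k - 1))

/-- candidate solution for the variable-check covariances -/
noncomputable def Ecand (L R : Finset ℕ) (lam rho : ℕ → ℝ) (ε : ℝ) (dc : ℕ) (k j : ℕ) (y : ℝ) : ℝ :=
  (Ff L lam ε y * ((k : ℝ) * lhat lam ε k y / eF L lam ε y) - ε * lhat lam ε k y * (y ^ k - 1)) *
      ((xD L lam ε y / xF L lam ε y) * Gf L R lam rho ε dc j y - (if j = 1 then (1 : ℝ) else 0))
  - ((k : ℝ) * lhat lam ε k y / eF L lam ε y) * Gf L R lam rho ε dc j y *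
      ((Fd L lam ε y + xF L lam ε y) / 2 - ε * xF L lam ε y * y ^ k)

section Aux

variable {L R : Finset ℕ} {lam rho : ℕ → ℝ} {ε y : ℝ}

lemma hasDerivAt_lamP (hL2 : ∀ k ∈ L, 2 ≤ k) :
    HasDerivAt (lamP L lam) (lamD L lam y) y := by
  unfold lamP lamD
  apply HasDerivAt.fun_sum
  intro k hk
  have h2 := hL2 k hk
  have h := ((hasDerivAt_pow (k - 1) y).const_mul (lam k))
  refine h.congr_deriv ?_
  have h1 : ((k - 1 : ℕ) : ℝ) = (k : ℝ) - 1 := by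
    push_cast [Nat.cast_sub (by omega : 1 ≤ k)]; ring
  have h2' : k - 1 - 1 = k - 2 := by omega
  rw [h2', h1]; ring

lemma hasDerivAt_lamD (hL2 : ∀ k ∈ L, 2 ≤ k) :
    HasDerivAt (lamD L lam) (lamDD L lam y) y := by
  unfold lamD lamDD
  apply HasDerivAt.fun_sum
  intro k hk
  have h2 := hL2 k hk
  have h := ((hasDerivAt_pow (k - 2) y).const_mul (((k : ℝ) - 1) * lam k))
  refine h.congr_deriv ?_
  have h1 : ((k - 2 : ℕ) : ℝ) = (k : ℝ) - 2 := by
    push_cast [Nat.cast_sub (by omega : 2 ≤ k)]; ring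
  have h2' : k - 2 - 1 = k - 3 := by omega
  rw [h2', h1]; ring

lemma hasDerivAt_Ff (hL2 : ∀ k ∈ L, 2 ≤ k) :
    HasDerivAt (fun y => Ff L lam ε y) (Fd L lam ε y) y := by
  unfold Ff Fd xF lamP
  have : HasDerivAt (fun y : ℝ => ∑ k ∈ L, lam k / (k : ℝ) * (ε ^ 2 * (y ^ k - 1) ^ 2 + ε * (y ^ k - 1)))
      (∑ k ∈ L, lam k / (k : ℝ) * (ε ^ 2 * (2 * (y ^ k - 1) * ((k : ℝ) * y ^ (k - 1))) + ε * ((k : ℝ) * y ^ (k - 1)))) y := by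
    apply HasDerivAt.fun_sum
    intro k hk
    have hp : HasDerivAt (fun y : ℝ => y ^ k) ((k : ℝ) * y ^ (k - 1)) y := hasDerivAt_pow k y
    have hp1 : HasDerivAt (fun y : ℝ => y ^ k - 1) ((k : ℝ) * y ^ (k - 1)) y := hp.sub_const 1
    exact (((hp1.pow 2).congr_deriv (by push_cast; ring)).const_mul (ε ^ 2)|>.add
      (hp1.const_mul ε)).const_mul _
  convert this using 1
  rw [sub_eq_iff_eq_add]
  simp only [mul_sum, ← sum_add_distrib]
  apply sum_congr rfl
  intro k hk
  have h2 := hL2 k hk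
  have hk0 : (k : ℝ) ≠ 0 := by positivity
  have hpow : y ^ (2 * k - 1) = y ^ k * y ^ (k - 1) := by
    rw [← pow_add]; congr 1; omega
  field_simp
  rw [hpow]
  ring

lemma hasDerivAt_rhoP {R : Finset ℕ} {rho : ℕ → ℝ} {z : ℝ} (hR2 : ∀ k ∈ R, 2 ≤ k) :
    HasDerivAt (rhoP R rho) (rhoD R rho z) z := by
  unfold rhoP rhoD
  apply HasDerivAt.fun_sum
  intro k hk
  have h2 := hR2 k hk
  have h := ((hasDerivAt_pow (k - 1) z).const_mul (rho k))
  refine h.congr_deriv ?_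
  have h1 : ((k - 1 : ℕ) : ℝ) = (k : ℝ) - 1 := by
    push_cast [Nat.cast_sub (by omega : 1 ≤ k)]; ring
  have h2' : k - 1 - 1 = k - 2 := by omega
  rw [h2', h1]; ring

lemma hasDerivAt_Fd (hL2 : ∀ k ∈ L, 2 ≤ k) (hy : y ≠ 0) :
    HasDerivAt (fun y => Fd L lam ε y)
      (2 * ε ^ 2 * (2 * T2f L lam y - Tf L lam y) / y - (ε - (1 - ε)) * xD L lam ε y) y := by
  unfold Fd
  have h1 : HasDerivAt (fun y : ℝ => ∑ k ∈ L, ε ^ 2 * lam k * y ^ (2 * k - 1))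
      (∑ k ∈ L, ε ^ 2 * lam k * (((2 * k - 1 : ℕ) : ℝ) * y ^ (2 * k - 2))) y := by
    apply HasDerivAt.fun_sum
    intro k hk
    have h := (hasDerivAt_pow (2 * k - 1) y).const_mul (ε ^ 2 * lam k)
    rw [show 2 * k - 1 - 1 = 2 * k - 2 from by omega] at h
    exact h
  have h2 : HasDerivAt (fun y => xF L lam ε y) (xD L lam ε y) y :=
    (hasDerivAt_lamP hL2).const_mul ε
  refine HasDerivAt.sub ((h1.const_mul 2).congr_deriv ?_) (h2.const_mul _)
  rw [eq_div_iff hy]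
  unfold T2f Tf
  simp only [mul_sum, sum_mul, mul_sub, ← sum_sub_distrib]
  apply sum_congr rfl
  intro k hk
  have hk2 := hL2 k hk
  have hc : ((2 * k - 1 : ℕ) : ℝ) = 2 * (k : ℝ) - 1 := by
    push_cast [Nat.cast_sub (by omega : 1 ≤ 2 * k)]; ring
  have hp : y ^ (2 * k - 1) = y ^ (2 * k - 2) * y := by
    rw [← pow_succ]; congr 1; omega
  rw [hc, hp]; ring

lemma sum_lam_pow (hL2 : ∀ k ∈ L, 2 ≤ k) :
    ∑ k ∈ L, lam k * y ^ k = y * lamP L lam y := by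
  unfold lamP; rw [mul_sum]
  refine sum_congr rfl fun k hk => ?_
  have := hL2 k hk
  have : y ^ k = y * y ^ (k - 1) := by rw [← pow_succ']; congr 1; omega
  rw [this]; ring

lemma sum_klam_pow (hL2 : ∀ k ∈ L, 2 ≤ k) :
    ∑ k ∈ L, (k : ℝ) * lam k * y ^ k = y * (lamP L lam y + y * lamD L lam y) := by
  unfold lamP lamD
  simp only [mul_add, mul_sum]
  rw [← sum_add_distrib]
  refine sum_congr rfl fun k hk => ?_
  have h2 := hL2 k hk
  have e1 : y ^ k = y * y ^ (k - 1) := by rw [← pow_succ']; congr 1; omega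
  have e2 : y ^ (k - 1) = y * y ^ (k - 2) := by rw [← pow_succ']; congr 1; omega
  rw [e1, e2]; push_cast; ring

lemma sum_k2lam_pow (hL2 : ∀ k ∈ L, 2 ≤ k) :
    ∑ k ∈ L, (k : ℝ) ^ 2 * lam k * y ^ k = y * Bf L lam y := by
  unfold Bf; rw [mul_sum]
  refine sum_congr rfl fun k hk => ?_
  have := hL2 k hk
  have : y ^ k = y * y ^ (k - 1) := by rw [← pow_succ']; congr 1; omega
  rw [this]; ring

lemma sum_lam_pow2 (hL2 : ∀ k ∈ L, 2 ≤ k) :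
    ∑ k ∈ L, lam k * (y ^ k) ^ 2 = y * Tf L lam y := by
  unfold Tf; rw [mul_sum]
  refine sum_congr rfl fun k hk => ?_
  have := hL2 k hk
  have : (y ^ k) ^ 2 = y * y ^ (2 * k - 1) := by
    rw [← pow_mul, ← pow_succ']; congr 1; omega
  rw [this]; ring

lemma sum_klam_pow2 (hL2 : ∀ k ∈ L, 2 ≤ k) :
    ∑ k ∈ L, (k : ℝ) * lam k * (y ^ k) ^ 2 = y * T2f L lam y := by
  unfold T2f; rw [mul_sum]
  refine sum_congr rfl fun k hk => ?_
  have := hL2 k hk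
  have : (y ^ k) ^ 2 = y * y ^ (2 * k - 1) := by
    rw [← pow_mul, ← pow_succ']; congr 1; omega
  rw [this]; ring

lemma lamDD_eq (hL2 : ∀ k ∈ L, 2 ≤ k) :
    y ^ 2 * lamDD L lam y = Bf L lam y - 3 * y * lamD L lam y - lamP L lam y := by
  unfold lamDD Bf lamD lamP
  rw [mul_sum]
  rw [show (∑ k ∈ L, (k:ℝ)^2*lam k*y^(k-1)) - 3*y*(∑ k ∈ L, ((k:ℝ)-1)*lam k*y^(k-2)) - ∑ k ∈ L, lam k*y^(k-1)
      = ∑ k ∈ L, ((k:ℝ)^2*lam k*y^(k-1) - 3*y*(((k:ℝ)-1)*lam k*y^(k-2)) - lam k*y^(k-1)) by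
    rw [sum_sub_distrib, sum_sub_distrib, mul_sum]]
  refine sum_congr rfl fun k hk => ?_
  have h2 := hL2 k hk
  rcases Nat.lt_or_ge k 3 with h3 | h3
  · have : k = 2 := by omega
    subst this; norm_num; ring
  · have e1 : y ^ (k - 1) = y ^ 2 * y ^ (k - 3) := by rw [← pow_add]; congr 1; omega
    have e2 : y ^ (k - 2) = y * y ^ (k - 3) := by rw [← pow_succ']; congr 1; omega
    rw [e1, e2]; ring

lemma lamP_pos (hL : L.Nonempty) (hL2 : ∀ k ∈ L, 2 ≤ k) (hlamPos : ∀ k ∈ L, 0 < lam k)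
    (hy : 0 < y) : 0 < lamP L lam y := by
  unfold lamP
  apply sum_pos _ hL
  intro k hk
  exact mul_pos (hlamPos k hk) (pow_pos hy _)

end Aux

section Rhat

variable {L R : Finset ℕ} {lam rho : ℕ → ℝ} {ε y : ℝ} {dc : ℕ}

lemma rhat_succ_dc_zero (hdcR : ∀ i ∈ R, i ≤ dc) (hdc2 : 2 ≤ dc) :
    rhat L R lam rho ε (dc + 1) y = 0 := by
  unfold rhat
  rw [if_neg (by omega)]
  apply sum_eq_zero
  intro i hi
  have : (i - 1).choose (dc + 1 - 1) = 0 :=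
    Nat.choose_eq_zero_of_lt (by have := hdcR i hi; omega)
  rw [this]; push_cast; ring

lemma rhat_two (hR2 : ∀ k ∈ R, 2 ≤ k) :
    rhat L R lam rho ε 2 y = xF L lam ε y ^ 2 * rhoD R rho (1 - xF L lam ε y) := by
  unfold rhat rhoD
  rw [if_neg (by omega), mul_sum]
  refine sum_congr rfl fun i hi => ?_
  have h2 := hR2 i hi
  have hc : ((i - 1).choose (2 - 1) : ℝ) = (i : ℝ) - 1 := by
    rw [Nat.choose_one_right]
    push_cast [Nat.cast_sub (by omega : 1 ≤ i)]; ring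
  rw [hc]; ring

lemma rhat_hasDeriv (hL2 : ∀ k ∈ L, 2 ≤ k) (hR2 : ∀ k ∈ R, 2 ≤ k) {j : ℕ} (hj : 1 ≤ j) :
    ∃ d, HasDerivAt (fun y => rhat L R lam rho ε j y) d y ∧
      xF L lam ε y * d = (j : ℝ) * xD L lam ε y *
          (rhat L R lam rho ε j y - rhat L R lam rho ε (j + 1) y)
        + (if j = 1 then xF L lam ε y ^ 2 else 0) := by
  have hx : HasDerivAt (fun y => xF L lam ε y) (xD L lam ε y) y :=
    (hasDerivAt_lamP hL2).const_mul ε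
  rcases eq_or_lt_of_le hj with h1 | h2
  · -- j = 1
    subst h1
    have hrho : HasDerivAt (fun y => rhoP R rho (1 - xF L lam ε y))
        (rhoD R rho (1 - xF L lam ε y) * (0 - xD L lam ε y)) y :=
      (hasDerivAt_rhoP hR2).comp y ((hasDerivAt_const y (1:ℝ)).sub hx)
    have hin : HasDerivAt (fun y => y - 1 + rhoP R rho (1 - xF L lam ε y))
        (1 + rhoD R rho (1 - xF L lam ε y) * (0 - xD L lam ε y)) y :=
      (((hasDerivAt_id y).sub_const 1).add hrho).congr_deriv (by ring)
    have hfe : (fun y => rhat L R lam rho ε 1 y)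
        = (fun y => xF L lam ε y * (y - 1 + rhoP R rho (1 - xF L lam ε y))) := by
      funext t; unfold rhat; rw [if_pos rfl]
    refine ⟨xD L lam ε y * (y - 1 + rhoP R rho (1 - xF L lam ε y))
      + xF L lam ε y * (1 + rhoD R rho (1 - xF L lam ε y) * (0 - xD L lam ε y)), ?_, ?_⟩
    · rw [hfe]; exact hx.mul hin
    · rw [show rhat L R lam rho ε 1 y = xF L lam ε y * (y - 1 + rhoP R rho (1 - xF L lam ε y))
        from by unfold rhat; rw [if_pos rfl]]
      rw [rhat_two hR2]
      rw [if_pos rfl]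
      ring
  · -- 2 ≤ j
    have hfun : ∀ t : ℝ, rhat L R lam rho ε j t =
        ∑ i ∈ R, rho i * ((i - 1).choose (j - 1) : ℝ) * xF L lam ε t ^ j *
          (1 - xF L lam ε t) ^ (i - j) := by
      intro t; unfold rhat; rw [if_neg (by omega)]
    refine ⟨∑ i ∈ R, rho i * ((i - 1).choose (j - 1) : ℝ) *
        (((j : ℝ) * xF L lam ε y ^ (j - 1) * xD L lam ε y) * (1 - xF L lam ε y) ^ (i - j)
          + xF L lam ε y ^ j *
            (((i - j : ℕ) : ℝ) * (1 - xF L lam ε y) ^ (i - j - 1) * (0 - xD L lam ε y))), ?_, ?_⟩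
    · rw [show (fun t => rhat L R lam rho ε j t) = (fun t => ∑ i ∈ R,
          rho i * ((i - 1).choose (j - 1) : ℝ) * xF L lam ε t ^ j *
          (1 - xF L lam ε t) ^ (i - j)) from funext hfun]
      apply HasDerivAt.fun_sum
      intro i hi
      have hxp : HasDerivAt (fun t => xF L lam ε t ^ j)
          ((j : ℝ) * xF L lam ε y ^ (j - 1) * xD L lam ε y) y := hx.pow j
      have hxq : HasDerivAt (fun t => (1 - xF L lam ε t) ^ (i - j))
          (((i - j : ℕ) : ℝ) * (1 - xF L lam ε y) ^ (i - j - 1) * (0 - xD L lam ε y)) y :=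
        ((hasDerivAt_const y (1:ℝ)).sub hx).pow (i - j)
      exact (((hxp.const_mul (rho i * ((i - 1).choose (j - 1) : ℝ))).mul hxq).congr_deriv
        (by ring))
    · rw [hfun y, show rhat L R lam rho ε (j+1) y = ∑ i ∈ R, rho i *
          ((i - 1).choose (j + 1 - 1) : ℝ) * xF L lam ε y ^ (j+1) * (1 - xF L lam ε y) ^ (i - (j+1))
        from by unfold rhat; rw [if_neg (by omega)]]
      rw [if_neg (by omega)]
      rw [mul_sum]
      rw [show ((j:ℝ) * xD L lam ε y * ((∑ i ∈ R, rho i * ((i - 1).choose (j - 1) : ℝ) *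
            xF L lam ε y ^ j * (1 - xF L lam ε y) ^ (i - j)) - ∑ i ∈ R, rho i *
          ((i - 1).choose (j + 1 - 1) : ℝ) * xF L lam ε y ^ (j+1) * (1 - xF L lam ε y) ^ (i - (j+1)))
          + 0 : ℝ) = ∑ i ∈ R, ((j:ℝ) * xD L lam ε y * (rho i * ((i - 1).choose (j - 1) : ℝ) *
            xF L lam ε y ^ j * (1 - xF L lam ε y) ^ (i - j) - rho i *
          ((i - 1).choose (j + 1 - 1) : ℝ) * xF L lam ε y ^ (j+1) * (1 - xF L lam ε y) ^ (i - (j+1))))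
        from by rw [← sum_sub_distrib, ← mul_sum]; ring]
      refine sum_congr rfl fun i hi => ?_
      have hchoose : ((i - j : ℕ) : ℝ) * ((i - 1).choose (j - 1) : ℝ)
          = (j : ℝ) * ((i - 1).choose j : ℝ) := by
        have h := Nat.choose_succ_right_eq (i - 1) (j - 1)
        have hj1 : j - 1 + 1 = j := by omega
        rw [hj1] at h
        have h2 : i - 1 - (j - 1) = i - j := by omega
        rw [h2] at h
        have hn : (i - j) * (i - 1).choose (j - 1) = j * (i - 1).choose j := by
          rw [Nat.mul_comm, ← h, Nat.mul_comm]
        exact_mod_cast hn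
      have hxj : xF L lam ε y ^ j = xF L lam ε y ^ (j-1) * xF L lam ε y := by
        rw [← pow_succ]; congr 1; omega
      have hxj1 : xF L lam ε y ^ (j+1) = xF L lam ε y ^ j * xF L lam ε y := by rw [← pow_succ]
      have hq : (1 - xF L lam ε y) ^ (i - j) =
          (1 - xF L lam ε y) ^ (i - j) := rfl
      have hsub : i - (j+1) = i - j - 1 := by omega
      have hj11 : j + 1 - 1 = j := by omega
      rw [hsub, hj11]
      -- goal: x * (rho * C1 * (j x^{j-1} x' q + x^j * (c * q1 * (0 - x'))))
      --     = j x' (rho C1 x^j q - rho C2 x^{j+1} q1)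
      rcases Nat.lt_or_ge i (j+1) with hij | hij
      · -- i ≤ j : i - j = 0 or i = j... handle: i - j ≤ 0 cases
        have hij0 : i - j = 0 := by omega
        have hc2 : (i-1).choose j = 0 := Nat.choose_eq_zero_of_lt (by omega)
        rw [hij0, hc2, hxj1, hxj]
        push_cast
        ring
      · have hq1 : (1 - xF L lam ε y) ^ (i - j) =
            (1 - xF L lam ε y) ^ (i - j - 1) * (1 - xF L lam ε y) := by
          rw [← pow_succ]; congr 1; omega
        rw [hxj1, hxj, hq1]
        linear_combination (-(rho i) * (xF L lam ε y ^ (j-1) * xF L lam ε y * xF L lam ε y)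
          * (1 - xF L lam ε y) ^ (i - j - 1) * xD L lam ε y) * hchoose
  
end Rhat

section Gfl

variable {L R : Finset ℕ} {lam rho : ℕ → ℝ} {ε y : ℝ} {dc : ℕ}

lemma Gf_eq (hdcR : ∀ i ∈ R, i ≤ dc) (hdc2 : 2 ≤ dc) {j : ℕ} (hj1 : 1 ≤ j) (hj : j ≤ dc) :
    Gf L R lam rho ε dc j y
      = (j : ℝ) * (rhat L R lam rho ε (j + 1) y - rhat L R lam rho ε j y) / xF L lam ε y := by
  unfold Gf
  split_ifs with h
  · subst h
    rw [rhat_succ_dc_zero hdcR hdc2]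
    ring
  · rfl

lemma hasDerivAt_Gf (hL2 : ∀ k ∈ L, 2 ≤ k) (hR2 : ∀ k ∈ R, 2 ≤ k)
    (hdcR : ∀ i ∈ R, i ≤ dc) (hdc2 : 2 ≤ dc) {j : ℕ} (hj1 : 1 ≤ j) (hjlt : j < dc)
    (hx : xF L lam ε y ≠ 0) :
    HasDerivAt (fun y => Gf L R lam rho ε dc j y)
      (-(xD L lam ε y / xF L lam ε y) *
          ((j : ℝ) * (Gf L R lam rho ε dc (j + 1) y - Gf L R lam rho ε dc j y)
            + Gf L R lam rho ε dc j y)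
        - (if j = 1 then (1 : ℝ) else 0)) y := by
  obtain ⟨d, hd, hxd⟩ := rhat_hasDeriv (L := L) (R := R) (lam := lam) (rho := rho) (ε := ε)
    (y := y) hL2 hR2 hj1
  obtain ⟨d2, hd2, hxd2⟩ := rhat_hasDeriv (L := L) (R := R) (lam := lam) (rho := rho) (ε := ε)
    (y := y) hL2 hR2 (le_trans hj1 (Nat.le_succ j))
  have hxF : HasDerivAt (fun y => xF L lam ε y) (xD L lam ε y) y :=
    (hasDerivAt_lamP hL2).const_mul ε
  have hGfun : (fun y => Gf L R lam rho ε dc j y)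
      = fun y => (j : ℝ) * (rhat L R lam rho ε (j + 1) y - rhat L R lam rho ε j y) / xF L lam ε y :=
    funext fun t => Gf_eq hdcR hdc2 hj1 (by omega)
  rw [hGfun]
  have hder : HasDerivAt
      (fun y => (j : ℝ) * (rhat L R lam rho ε (j + 1) y - rhat L R lam rho ε j y) / xF L lam ε y)
      ((((j : ℝ) * (d2 - d)) * xF L lam ε y
          - (j : ℝ) * (rhat L R lam rho ε (j + 1) y - rhat L R lam rho ε j y) * xD L lam ε y)
        / xF L lam ε y ^ 2) y :=
    ((hd2.sub hd).const_mul (j : ℝ)).div hxF hx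
  refine hder.congr_deriv ?_
  rw [Gf_eq (y := y) hdcR hdc2 hj1 (by omega),
    Gf_eq (y := y) hdcR hdc2 (le_trans hj1 (Nat.le_succ j)) (by omega)]
  have hd2v : d2 = ((j + 1 : ℝ) * xD L lam ε y *
      (rhat L R lam rho ε (j + 1) y - rhat L R lam rho ε (j + 1 + 1) y)) / xF L lam ε y := by
    rw [eq_div_iff hx]
    rw [if_neg (by omega)] at hxd2
    push_cast at hxd2 ⊢
    linarith [hxd2]
  have hdv : d = ((j : ℝ) * xD L lam ε y *
      (rhat L R lam rho ε j y - rhat L R lam rho ε (j + 1) y)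
        + (if j = 1 then xF L lam ε y ^ 2 else 0)) / xF L lam ε y := by
    rw [eq_div_iff hx]
    linarith [hxd]
  rw [hd2v, hdv]
  rcases eq_or_ne j 1 with hj1' | hj1'
  · subst hj1'
    rw [if_pos rfl, if_pos rfl]
    field_simp
    ring
  · rw [if_neg hj1', if_neg hj1']
    field_simp
    push_cast; ring

lemma telescope_sum (g : ℕ → ℝ) : ∀ n : ℕ, 1 ≤ n →
    ∑ j ∈ Icc 1 (n - 1), (j : ℝ) * (g (j + 1) - g j)
      = (n : ℝ) * g n - ∑ j ∈ Icc 1 n, g j := by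
  intro n
  induction n with
  | zero => omega
  | succ m ih =>
    intro _
    rcases Nat.eq_zero_or_pos m with hm | hm
    · subst hm; simp
    · have h1 : m + 1 - 1 = m := by omega
      rw [h1]
      have h2 : Icc 1 m = Icc 1 (m - 1 + 1) := by congr 1; omega
      have h3 : ∑ j ∈ Icc 1 m, (j : ℝ) * (g (j + 1) - g j)
          = ∑ j ∈ Icc 1 (m - 1), (j : ℝ) * (g (j + 1) - g j) + (m : ℝ) * (g (m + 1) - g m) := by
        rw [h2, Finset.sum_Icc_succ_top (by omega)]
        congr 2 <;> [skip; rw [show m - 1 + 1 = m from by omega]] <;>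
          rw [show m - 1 + 1 = m from by omega]
      rw [h3, ih hm]
      rw [Finset.sum_Icc_succ_top (by omega : 1 ≤ m + 1)]
      push_cast
      ring

lemma sum_rhat_eq (hR2 : ∀ k ∈ R, 2 ≤ k) (hdcR : ∀ i ∈ R, i ≤ dc) (hdc2 : 2 ≤ dc)
    (hrhoSum : ∑ k ∈ R, rho k = 1) :
    ∑ j ∈ Icc 1 dc, rhat L R lam rho ε j y = xF L lam ε y * y := by
  have h1 : Icc 1 dc = insert 1 (Icc 2 dc) := by
    ext a; simp only [Finset.mem_Icc, Finset.mem_insert]; omega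
  rw [h1, Finset.sum_insert (by simp)]
  have h2 : ∀ i ∈ R, ∑ j ∈ Icc 2 dc, rho i * ((i - 1).choose (j - 1) : ℝ)
      * xF L lam ε y ^ j * (1 - xF L lam ε y) ^ (i - j)
      = rho i * (xF L lam ε y * (1 - (1 - xF L lam ε y) ^ (i - 1))) := by
    intro i hi
    have hi2 := hR2 i hi
    have hidc := hdcR i hi
    -- restrict to Icc 2 i
    rw [← Finset.sum_subset (Finset.Icc_subset_Icc_right hidc)
      (fun j hj hj2 => by
        have : i < j := by
          simp only [Finset.mem_Icc] at hj hj2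
          omega
        rw [Nat.choose_eq_zero_of_lt (by omega)]
        push_cast; ring)]
    -- reindex j = m + 1 over Icc 1 (i-1)
    have hreindex : ∑ j ∈ Icc 2 i, rho i * ((i - 1).choose (j - 1) : ℝ)
        * xF L lam ε y ^ j * (1 - xF L lam ε y) ^ (i - j)
        = ∑ m ∈ Icc 1 (i - 1), rho i * ((i - 1).choose m : ℝ)
          * xF L lam ε y ^ (m + 1) * (1 - xF L lam ε y) ^ (i - 1 - m) := by
      rw [show Icc 2 i = Ico 2 (i + 1) from (Finset.Ico_add_one_right_eq_Icc 2 i).symm,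
        show Icc 1 (i - 1) = Ico 1 i from by rw [← Finset.Ico_add_one_right_eq_Icc]; congr 1; omega,
        Finset.sum_Ico_eq_sum_range, Finset.sum_Ico_eq_sum_range]
      rw [show i + 1 - 2 = i - 1 from by omega]
      refine sum_congr rfl fun r hr => ?_
      simp only [Finset.mem_range] at hr
      rw [show 2 + r - 1 = 1 + r from by omega, show i - (2 + r) = i - 1 - (1 + r) from by omega,
        show (1 + r) + 1 = 2 + r from by omega]
    rw [hreindex]
    -- binomial theorem
    have hbinom : ∑ m ∈ range (i - 1 + 1), xF L lam ε y ^ m * (1 - xF L lam ε y) ^ (i - 1 - m)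
        * ((i - 1).choose m : ℝ) = 1 := by
      rw [← add_pow]
      norm_num
    have hIcc : Icc 0 (i - 1) = range (i - 1 + 1) := by
      rw [Finset.range_eq_Ico, ← Finset.Ico_add_one_right_eq_Icc]
    have hsplit : ∑ m ∈ Icc 0 (i - 1), xF L lam ε y ^ m * (1 - xF L lam ε y) ^ (i - 1 - m)
        * ((i - 1).choose m : ℝ)
        = (1 - xF L lam ε y) ^ (i - 1)
          + ∑ m ∈ Icc 1 (i - 1), xF L lam ε y ^ m * (1 - xF L lam ε y) ^ (i - 1 - m)
            * ((i - 1).choose m : ℝ) := by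
      rw [show Icc 0 (i - 1) = insert 0 (Icc 1 (i - 1)) from by
        ext a; simp only [Finset.mem_Icc, Finset.mem_insert]; omega]
      rw [Finset.sum_insert (by simp)]
      norm_num
    have hkey : ∑ m ∈ Icc 1 (i - 1), xF L lam ε y ^ m * (1 - xF L lam ε y) ^ (i - 1 - m)
        * ((i - 1).choose m : ℝ) = 1 - (1 - xF L lam ε y) ^ (i - 1) := by
      have := hsplit
      rw [hIcc, hbinom] at this
      linarith
    calc ∑ m ∈ Icc 1 (i - 1), rho i * ((i - 1).choose m : ℝ)
          * xF L lam ε y ^ (m + 1) * (1 - xF L lam ε y) ^ (i - 1 - m)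
        = rho i * xF L lam ε y * ∑ m ∈ Icc 1 (i - 1), xF L lam ε y ^ m
            * (1 - xF L lam ε y) ^ (i - 1 - m) * ((i - 1).choose m : ℝ) := by
          rw [mul_sum]
          refine sum_congr rfl fun m hm => ?_
          rw [pow_succ]
          ring
      _ = rho i * (xF L lam ε y * (1 - (1 - xF L lam ε y) ^ (i - 1))) := by
          rw [hkey]; ring
  have h3 : ∑ j ∈ Icc 2 dc, rhat L R lam rho ε j y
      = xF L lam ε y * (1 - rhoP R rho (1 - xF L lam ε y)) := by
    have : ∑ j ∈ Icc 2 dc, rhat L R lam rho ε j y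
        = ∑ i ∈ R, ∑ j ∈ Icc 2 dc, rho i * ((i - 1).choose (j - 1) : ℝ)
          * xF L lam ε y ^ j * (1 - xF L lam ε y) ^ (i - j) := by
      rw [Finset.sum_comm]
      refine sum_congr rfl fun j hj => ?_
      simp only [Finset.mem_Icc] at hj
      unfold rhat
      rw [if_neg (by omega)]
    rw [this, Finset.sum_congr rfl h2]
    calc ∑ i ∈ R, rho i * (xF L lam ε y * (1 - (1 - xF L lam ε y) ^ (i - 1)))
        = ∑ i ∈ R, (xF L lam ε y * rho i
            - xF L lam ε y * (rho i * (1 - xF L lam ε y) ^ (i - 1))) :=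
          sum_congr rfl fun i _ => by ring
      _ = xF L lam ε y * (∑ i ∈ R, rho i)
            - xF L lam ε y * ∑ i ∈ R, rho i * (1 - xF L lam ε y) ^ (i - 1) := by
          rw [sum_sub_distrib, ← mul_sum, ← mul_sum]
      _ = xF L lam ε y * (1 - rhoP R rho (1 - xF L lam ε y)) := by
          rw [hrhoSum]; unfold rhoP; ring
  rw [h3]
  rw [show rhat L R lam rho ε 1 y = xF L lam ε y * (y - 1 + rhoP R rho (1 - xF L lam ε y))
    from by unfold rhat; rw [if_pos rfl]]
  ring

lemma sum_Gf_eq (hR2 : ∀ k ∈ R, 2 ≤ k) (hdcR : ∀ i ∈ R, i ≤ dc) (hdc2 : 2 ≤ dc)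
    (hrhoSum : ∑ k ∈ R, rho k = 1) (hx : xF L lam ε y ≠ 0) :
    ∑ j ∈ Icc 1 (dc - 1), Gf L R lam rho ε dc j y = -y - Gf L R lam rho ε dc dc y := by
  apply mul_left_cancel₀ hx
  rw [Finset.mul_sum]
  have h1 : ∀ j ∈ Icc 1 (dc - 1), xF L lam ε y * Gf L R lam rho ε dc j y
      = (j : ℝ) * (rhat L R lam rho ε (j + 1) y - rhat L R lam rho ε j y) := by
    intro j hj
    simp only [Finset.mem_Icc] at hj
    rw [Gf_eq hdcR hdc2 (by omega) (by omega)]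
    field_simp
  have ht : ∑ j ∈ Icc 1 (dc - 1), (j : ℝ) * (rhat L R lam rho ε (j + 1) y - rhat L R lam rho ε j y)
      = (dc : ℝ) * rhat L R lam rho ε dc y - ∑ j ∈ Icc 1 dc, rhat L R lam rho ε j y :=
    telescope_sum (fun n => rhat L R lam rho ε n y) dc (by omega)
  rw [Finset.sum_congr rfl h1, ht, sum_rhat_eq hR2 hdcR hdc2 hrhoSum]
  have h2 : xF L lam ε y * Gf L R lam rho ε dc dc y = -((dc : ℝ) * rhat L R lam rho ε dc y) := by
    unfold Gf
    rw [if_pos rfl]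
    field_simp
  rw [mul_sub, h2]
  ring

end Gfl

section Cand

variable {L R : Finset ℕ} {lam rho : ℕ → ℝ} {ε y : ℝ} {dc : ℕ}

lemma sum_lhat (hL2 : ∀ k ∈ L, 2 ≤ k) :
    ∑ t ∈ L, lhat lam ε t y = ε * (y * lamP L lam y) := by
  rw [show (∑ t ∈ L, lhat lam ε t y) = ε * ∑ t ∈ L, lam t * y ^ t from by
    rw [mul_sum]; exact sum_congr rfl fun t _ => by unfold lhat; ring]
  rw [sum_lam_pow hL2]

lemma sum_klhat (hL2 : ∀ k ∈ L, 2 ≤ k) :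
    ∑ t ∈ L, (t : ℝ) * lhat lam ε t y = ε * (y * (lamP L lam y + y * lamD L lam y)) := by
  rw [show (∑ t ∈ L, (t : ℝ) * lhat lam ε t y) = ε * ∑ t ∈ L, (t : ℝ) * lam t * y ^ t from by
    rw [mul_sum]; exact sum_congr rfl fun t _ => by unfold lhat; ring]
  rw [sum_klam_pow hL2]

lemma sum_k2lhat (hL2 : ∀ k ∈ L, 2 ≤ k) :
    ∑ t ∈ L, (t : ℝ) ^ 2 * lhat lam ε t y = ε * (y * Bf L lam y) := by
  rw [show (∑ t ∈ L, (t : ℝ) ^ 2 * lhat lam ε t y)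
      = ε * ∑ t ∈ L, (t : ℝ) ^ 2 * lam t * y ^ t from by
    rw [mul_sum]; exact sum_congr rfl fun t _ => by unfold lhat; ring]
  rw [sum_k2lam_pow hL2]

lemma sum_lhat_pow (hL2 : ∀ k ∈ L, 2 ≤ k) :
    ∑ t ∈ L, lhat lam ε t y * y ^ t = ε * (y * Tf L lam y) := by
  rw [show (∑ t ∈ L, lhat lam ε t y * y ^ t) = ε * ∑ t ∈ L, lam t * (y ^ t) ^ 2 from by
    rw [mul_sum]; exact sum_congr rfl fun t _ => by unfold lhat; ring]
  rw [sum_lam_pow2 hL2]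

lemma sum_klhat_pow (hL2 : ∀ k ∈ L, 2 ≤ k) :
    ∑ t ∈ L, (t : ℝ) * lhat lam ε t y * y ^ t = ε * (y * T2f L lam y) := by
  rw [show (∑ t ∈ L, (t : ℝ) * lhat lam ε t y * y ^ t)
      = ε * ∑ t ∈ L, (t : ℝ) * lam t * (y ^ t) ^ 2 from by
    rw [mul_sum]; exact sum_congr rfl fun t _ => by unfold lhat; ring]
  rw [sum_klam_pow2 hL2]

lemma sum_lhat_sub (hL2 : ∀ k ∈ L, 2 ≤ k) :
    ∑ t ∈ L, lhat lam ε t y * (y ^ t - 1) = ε * (y * Tf L lam y) - ε * (y * lamP L lam y) := by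
  rw [← sum_lhat_pow hL2, ← sum_lhat hL2, ← sum_sub_distrib]
  exact sum_congr rfl fun t _ => by ring

lemma sum_klhat_sub (hL2 : ∀ k ∈ L, 2 ≤ k) :
    ∑ t ∈ L, (t : ℝ) * lhat lam ε t y * (y ^ t - 1)
      = ε * (y * T2f L lam y) - ε * (y * (lamP L lam y + y * lamD L lam y)) := by
  rw [← sum_klhat_pow hL2, ← sum_klhat hL2, ← sum_sub_distrib]
  exact sum_congr rfl fun t _ => by ring

lemma sumD_eq (hL2 : ∀ k ∈ L, 2 ≤ k) {k : ℕ} (hk : k ∈ L) (hε : ε ≠ 0) (hy : y ≠ 0)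
    (hP : lamP L lam y ≠ 0) :
    ∑ t ∈ L, Dcand L lam ε k t y
      = (k : ℝ) * lhat lam ε k y * (1 - ε * y ^ k)
        - ((k : ℝ) * lhat lam ε k y / eF L lam ε y) * Ff L lam ε y *
            ((lamP L lam y + y * lamD L lam y) / lamP L lam y)
        + ((k : ℝ) * lhat lam ε k y / eF L lam ε y) * (ε ^ 2 * y * (Tf L lam y - lamP L lam y))
        + ε * lhat lam ε k y * (y ^ k - 1) *
            ((lamP L lam y + y * lamD L lam y) / lamP L lam y) := by
  have he : eF L lam ε y ≠ 0 := by
    unfold eF xF; exact mul_ne_zero (mul_ne_zero hε hP) hy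
  rw [show (∑ t ∈ L, Dcand L lam ε k t y)
      = ∑ t ∈ L, ((if k = t then ((k : ℝ) * lhat lam ε k y * (1 - ε * y ^ k)) else 0)
        + ((((k : ℝ) * lhat lam ε k y) * Ff L lam ε y / eF L lam ε y ^ 2) * (-1))
            * ((t : ℝ) * lhat lam ε t y)
        + (((k : ℝ) * lhat lam ε k y / eF L lam ε y) * ε) * (lhat lam ε t y * (y ^ t - 1))
        + ((ε * lhat lam ε k y * (y ^ k - 1)) / eF L lam ε y) * ((t : ℝ) * lhat lam ε t y)) from
    sum_congr rfl fun t _ => by unfold Dcand; split_ifs <;> ring]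
  rw [sum_add_distrib, sum_add_distrib, sum_add_distrib, ← mul_sum, ← mul_sum, ← mul_sum]
  rw [Finset.sum_ite_eq L k (fun _ => (k : ℝ) * lhat lam ε k y * (1 - ε * y ^ k)), if_pos hk]
  rw [sum_klhat hL2, sum_lhat_sub hL2]
  unfold eF xF
  field_simp
  ring

lemma sumDt_eq (hL2 : ∀ k ∈ L, 2 ≤ k) {k : ℕ} (hk : k ∈ L) (hε : ε ≠ 0) (hy : y ≠ 0)
    (hP : lamP L lam y ≠ 0) :
    ∑ t ∈ L, (t : ℝ) * Dcand L lam ε k t y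
      = (k : ℝ) ^ 2 * lhat lam ε k y * (1 - ε * y ^ k)
        - ((k : ℝ) * lhat lam ε k y / eF L lam ε y) * Ff L lam ε y *
            (Bf L lam y / lamP L lam y)
        + ((k : ℝ) * lhat lam ε k y / eF L lam ε y) *
            (ε ^ 2 * y * (T2f L lam y - (lamP L lam y + y * lamD L lam y)))
        + ε * lhat lam ε k y * (y ^ k - 1) * (Bf L lam y / lamP L lam y) := by
  have he : eF L lam ε y ≠ 0 := by
    unfold eF xF; exact mul_ne_zero (mul_ne_zero hε hP) hy
  rw [show (∑ t ∈ L, (t : ℝ) * Dcand L lam ε k t y)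
      = ∑ t ∈ L, ((if k = t then ((k : ℝ) * (k : ℝ) * lhat lam ε k y * (1 - ε * y ^ k)) else 0)
        + ((((k : ℝ) * lhat lam ε k y) * Ff L lam ε y / eF L lam ε y ^ 2) * (-1))
            * ((t : ℝ) ^ 2 * lhat lam ε t y)
        + (((k : ℝ) * lhat lam ε k y / eF L lam ε y) * ε)
            * ((t : ℝ) * lhat lam ε t y * (y ^ t - 1))
        + ((ε * lhat lam ε k y * (y ^ k - 1)) / eF L lam ε y)
            * ((t : ℝ) ^ 2 * lhat lam ε t y)) from
    sum_congr rfl fun t _ => by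
      unfold Dcand
      split_ifs with h
      · subst h; ring
      · ring]
  rw [sum_add_distrib, sum_add_distrib, sum_add_distrib, ← mul_sum, ← mul_sum, ← mul_sum]
  rw [Finset.sum_ite_eq L k (fun _ => (k : ℝ) * (k : ℝ) * lhat lam ε k y * (1 - ε * y ^ k)),
    if_pos hk]
  rw [sum_k2lhat hL2, sum_klhat_sub hL2]
  unfold eF xF
  field_simp
  ring

lemma sumE_eq (hL2 : ∀ k ∈ L, 2 ≤ k) {j : ℕ} (hε : ε ≠ 0) (hy : y ≠ 0)
    (hP : lamP L lam y ≠ 0) :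
    ∑ t ∈ L, Ecand L R lam rho ε dc t j y
      = (Ff L lam ε y * ((lamP L lam y + y * lamD L lam y) / lamP L lam y)
            - ε * (ε * y * (Tf L lam y - lamP L lam y))) *
          ((xD L lam ε y / xF L lam ε y) * Gf L R lam rho ε dc j y
            - (if j = 1 then (1 : ℝ) else 0))
        - Gf L R lam rho ε dc j y *
            (((lamP L lam y + y * lamD L lam y) / lamP L lam y)
                * ((Fd L lam ε y + xF L lam ε y) / 2)
              - ε * xF L lam ε y * (T2f L lam y / lamP L lam y)) := by
  have he : eF L lam ε y ≠ 0 := by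
    unfold eF xF; exact mul_ne_zero (mul_ne_zero hε hP) hy
  rw [show (∑ t ∈ L, Ecand L R lam rho ε dc t j y)
      = ∑ t ∈ L, ((Ff L lam ε y / eF L lam ε y *
            ((xD L lam ε y / xF L lam ε y) * Gf L R lam rho ε dc j y
              - (if j = 1 then (1 : ℝ) else 0))
          - Gf L R lam rho ε dc j y * ((Fd L lam ε y + xF L lam ε y) / 2) / eF L lam ε y)
            * ((t : ℝ) * lhat lam ε t y)
        + (-(ε * ((xD L lam ε y / xF L lam ε y) * Gf L R lam rho ε dc j y
            - (if j = 1 then (1 : ℝ) else 0)))) * (lhat lam ε t y * (y ^ t - 1))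
        + (Gf L R lam rho ε dc j y * (ε * xF L lam ε y) / eF L lam ε y)
            * ((t : ℝ) * lhat lam ε t y * y ^ t)) from
    sum_congr rfl fun t _ => by unfold Ecand; ring]
  rw [sum_add_distrib, sum_add_distrib, ← mul_sum, ← mul_sum, ← mul_sum]
  rw [sum_klhat hL2, sum_klhat_pow hL2, sum_lhat_sub hL2]
  unfold eF xF
  field_simp
  ring

lemma lamP_one (hlamSum : ∑ k ∈ L, lam k = 1) : lamP L lam 1 = 1 := by
  unfold lamP
  rw [show (∑ k ∈ L, lam k * (1:ℝ) ^ (k - 1)) = ∑ k ∈ L, lam k from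
    sum_congr rfl fun k _ => by rw [one_pow, mul_one]]
  exact hlamSum

lemma Ff_one : Ff L lam ε 1 = 0 := by
  unfold Ff; exact sum_eq_zero fun k _ => by rw [one_pow]; ring

lemma Fd_one (hlamSum : ∑ k ∈ L, lam k = 1) : Fd L lam ε 1 = ε := by
  unfold Fd xF
  rw [lamP_one hlamSum]
  rw [show (∑ k ∈ L, ε ^ 2 * lam k * (1:ℝ) ^ (2 * k - 1)) = ε ^ 2 * ∑ k ∈ L, lam k from by
    rw [mul_sum]; exact sum_congr rfl fun k _ => by rw [one_pow]; ring]
  rw [hlamSum]; ring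

lemma Dcand_one (hε : ε ≠ 0) (hlamSum : ∑ k ∈ L, lam k = 1) (k s : ℕ) :
    Dcand L lam ε k s 1 = (if k = s then (1 : ℝ) else 0) * (k : ℝ) * lam k * ε * (1 - ε) := by
  unfold Dcand lhat eF xF
  rw [lamP_one hlamSum, Ff_one]
  simp only [one_pow]
  field_simp
  ring

lemma Ecand_one (hε : ε ≠ 0) (hlamSum : ∑ k ∈ L, lam k = 1) (k j : ℕ) :
    Ecand L R lam rho ε dc k j 1
      = -((k : ℝ) * lam k * ε * (1 - ε)) * Gf L R lam rho ε dc j 1 := by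
  unfold Ecand
  rw [Ff_one, Fd_one hlamSum]
  unfold lhat eF xF
  rw [lamP_one hlamSum]
  simp only [one_pow]
  field_simp
  ring

end Cand

section DcandDeriv

variable {L R : Finset ℕ} {lam rho : ℕ → ℝ} {ε y : ℝ} {dc : ℕ}

lemma Fd_eq_Tf :
    Fd L lam ε y = 2 * (ε ^ 2 * Tf L lam y) - (ε - (1 - ε)) * xF L lam ε y := by
  unfold Fd Tf
  rw [show (∑ k ∈ L, ε ^ 2 * lam k * y ^ (2 * k - 1))
      = ε ^ 2 * ∑ k ∈ L, lam k * y ^ (2 * k - 1) from by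
    rw [mul_sum]; exact sum_congr rfl fun k _ => by ring]

set_option maxHeartbeats 3200000 in
lemma hasDerivAt_Dcand (hL2 : ∀ k ∈ L, 2 ≤ k) {k s : ℕ} (hk : k ∈ L) (hs : s ∈ L)
    (hε : ε ≠ 0) (hy : y ≠ 0) (hP : lamP L lam y ≠ 0) :
    HasDerivAt (fun y => Dcand L lam ε k s y)
      (-(xF L lam ε y) *
          (((s : ℝ) * lhat lam ε s y / eF L lam ε y ^ 2) * ∑ t ∈ L, Dcand L lam ε k t y
            + ((k : ℝ) * lhat lam ε k y / eF L lam ε y ^ 2) * ∑ t ∈ L, Dcand L lam ε s t y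
            - (((k : ℝ) + (s : ℝ)) / eF L lam ε y) * Dcand L lam ε k s y)
        - xF L lam ε y * (k : ℝ) * (s : ℝ) * (lhat lam ε k y / eF L lam ε y) *
            ((if k = s then (1 : ℝ) else 0) - lhat lam ε s y / eF L lam ε y)) y := by
  have he0 : eF L lam ε y ≠ 0 := by
    unfold eF xF; exact mul_ne_zero (mul_ne_zero hε hP) hy
  have hk2 := hL2 k hk
  have hs2 := hL2 s hs
  have hxF : HasDerivAt (fun y => xF L lam ε y) (xD L lam ε y) y :=
    (hasDerivAt_lamP hL2).const_mul ε
  have he : HasDerivAt (fun y => eF L lam ε y) (xD L lam ε y * y + xF L lam ε y * 1) y := by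
    unfold eF
    exact hxF.mul (hasDerivAt_id y)
  have hlk : HasDerivAt (fun y => lhat lam ε k y) (ε * lam k * ((k : ℝ) * y ^ (k - 1))) y := by
    unfold lhat; exact (hasDerivAt_pow k y).const_mul (ε * lam k)
  have hls : HasDerivAt (fun y => lhat lam ε s y) (ε * lam s * ((s : ℝ) * y ^ (s - 1))) y := by
    unfold lhat; exact (hasDerivAt_pow s y).const_mul (ε * lam s)
  have hyk : HasDerivAt (fun y : ℝ => y ^ k) ((k : ℝ) * y ^ (k - 1)) y := hasDerivAt_pow k y
  have hys : HasDerivAt (fun y : ℝ => y ^ s) ((s : ℝ) * y ^ (s - 1)) y := hasDerivAt_pow s y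
  have hF : HasDerivAt (fun y => Ff L lam ε y) (Fd L lam ε y) y := hasDerivAt_Ff hL2
  have hA1 : HasDerivAt
      (fun y => (if k = s then (1:ℝ) else 0) * (k : ℝ) * lhat lam ε k y * (1 - ε * y ^ k))
      (((if k = s then (1:ℝ) else 0) * (k : ℝ) * (ε * lam k * ((k : ℝ) * y ^ (k - 1))))
          * (1 - ε * y ^ k)
        + ((if k = s then (1:ℝ) else 0) * (k : ℝ) * lhat lam ε k y)
            * (-(ε * ((k : ℝ) * y ^ (k - 1))))) y := by
    have h1 : HasDerivAt (fun y => (if k = s then (1:ℝ) else 0) * (k : ℝ) * lhat lam ε k y)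
        ((if k = s then (1:ℝ) else 0) * (k : ℝ) * (ε * lam k * ((k : ℝ) * y ^ (k - 1)))) y := by
      exact hlk.const_mul ((if k = s then (1:ℝ) else 0) * (k : ℝ))
    have h2 : HasDerivAt (fun y : ℝ => 1 - ε * y ^ k) (-(ε * ((k : ℝ) * y ^ (k - 1)))) y := by
      have := (hyk.const_mul ε).const_sub 1
      exact this.congr_deriv (by ring)
    exact h1.mul h2
  have hA2 : HasDerivAt
      (fun y => (k : ℝ) * lhat lam ε k y * ((s : ℝ) * lhat lam ε s y) / eF L lam ε y ^ 2
        * Ff L lam ε y)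
      ((((((k : ℝ) * (ε * lam k * ((k : ℝ) * y ^ (k - 1)))) * ((s : ℝ) * lhat lam ε s y)
            + ((k : ℝ) * lhat lam ε k y) * ((s : ℝ) * (ε * lam s * ((s : ℝ) * y ^ (s - 1)))))
              * eF L lam ε y ^ 2
          - (k : ℝ) * lhat lam ε k y * ((s : ℝ) * lhat lam ε s y)
              * (2 * eF L lam ε y ^ 1 * (xD L lam ε y * y + xF L lam ε y * 1)))
            / (eF L lam ε y ^ 2) ^ 2) * Ff L lam ε y
        + (k : ℝ) * lhat lam ε k y * ((s : ℝ) * lhat lam ε s y) / eF L lam ε y ^ 2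
            * Fd L lam ε y) y := by
    have hnum : HasDerivAt (fun y => (k : ℝ) * lhat lam ε k y * ((s : ℝ) * lhat lam ε s y))
        (((k : ℝ) * (ε * lam k * ((k : ℝ) * y ^ (k - 1)))) * ((s : ℝ) * lhat lam ε s y)
          + ((k : ℝ) * lhat lam ε k y) * ((s : ℝ) * (ε * lam s * ((s : ℝ) * y ^ (s - 1))))) y :=
      (hlk.const_mul (k : ℝ)).mul (hls.const_mul (s : ℝ))
    have hden : HasDerivAt (fun y => eF L lam ε y ^ 2)
        (2 * eF L lam ε y ^ 1 * (xD L lam ε y * y + xF L lam ε y * 1)) y := by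
      have := he.pow 2
      exact this.congr_deriv (by push_cast; ring)
    exact (hnum.div hden (pow_ne_zero 2 he0)).mul hF
  have hA3 : HasDerivAt
      (fun y => (k : ℝ) * lhat lam ε k y / eF L lam ε y * (ε * lhat lam ε s y * (y ^ s - 1)))
      (((((k : ℝ) * (ε * lam k * ((k : ℝ) * y ^ (k - 1)))) * eF L lam ε y
            - (k : ℝ) * lhat lam ε k y * (xD L lam ε y * y + xF L lam ε y * 1))
          / eF L lam ε y ^ 2) * (ε * lhat lam ε s y * (y ^ s - 1))
        + ((k : ℝ) * lhat lam ε k y / eF L lam ε y)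
            * ((ε * (ε * lam s * ((s : ℝ) * y ^ (s - 1)))) * (y ^ s - 1)
              + (ε * lhat lam ε s y) * ((s : ℝ) * y ^ (s - 1)))) y := by
    have h1 := (hlk.const_mul (k : ℝ)).div he he0
    have h2 : HasDerivAt (fun y => ε * lhat lam ε s y * (y ^ s - 1))
        ((ε * (ε * lam s * ((s : ℝ) * y ^ (s - 1)))) * (y ^ s - 1)
          + (ε * lhat lam ε s y) * ((s : ℝ) * y ^ (s - 1))) y :=
      (hls.const_mul ε).mul (hys.sub_const 1)
    exact h1.mul h2
  have hA4 : HasDerivAt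
      (fun y => (s : ℝ) * lhat lam ε s y / eF L lam ε y * (ε * lhat lam ε k y * (y ^ k - 1)))
      (((((s : ℝ) * (ε * lam s * ((s : ℝ) * y ^ (s - 1)))) * eF L lam ε y
            - (s : ℝ) * lhat lam ε s y * (xD L lam ε y * y + xF L lam ε y * 1))
          / eF L lam ε y ^ 2) * (ε * lhat lam ε k y * (y ^ k - 1))
        + ((s : ℝ) * lhat lam ε s y / eF L lam ε y)
            * ((ε * (ε * lam k * ((k : ℝ) * y ^ (k - 1)))) * (y ^ k - 1)
              + (ε * lhat lam ε k y) * ((k : ℝ) * y ^ (k - 1)))) y := by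
    have h1 := (hls.const_mul (s : ℝ)).div he he0
    have h2 : HasDerivAt (fun y => ε * lhat lam ε k y * (y ^ k - 1))
        ((ε * (ε * lam k * ((k : ℝ) * y ^ (k - 1)))) * (y ^ k - 1)
          + (ε * lhat lam ε k y) * ((k : ℝ) * y ^ (k - 1))) y :=
      (hlk.const_mul ε).mul (hyk.sub_const 1)
    exact h1.mul h2
  have hD := ((hA1.sub hA2).add hA3).add hA4
  have hfun : (fun y => Dcand L lam ε k s y) = (fun y =>
      (if k = s then (1:ℝ) else 0) * (k : ℝ) * lhat lam ε k y * (1 - ε * y ^ k)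
      - (k : ℝ) * lhat lam ε k y * ((s : ℝ) * lhat lam ε s y) / eF L lam ε y ^ 2 * Ff L lam ε y
      + (k : ℝ) * lhat lam ε k y / eF L lam ε y * (ε * lhat lam ε s y * (y ^ s - 1))
      + (s : ℝ) * lhat lam ε s y / eF L lam ε y * (ε * lhat lam ε k y * (y ^ k - 1))) := by
    funext t; unfold Dcand; rfl
  rw [hfun]
  refine hD.congr_deriv ?_
  rw [sumD_eq hL2 hk hε hy hP, sumD_eq hL2 hs hε hy hP]
  unfold Dcand
  rw [Fd_eq_Tf]
  unfold lhat eF xF xD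
  have hyk' : y ^ k = y ^ (k - 1) * y := by rw [← pow_succ]; congr 1; omega
  have hys' : y ^ s = y ^ (s - 1) * y := by rw [← pow_succ]; congr 1; omega
  rw [hyk', hys']
  rcases eq_or_ne k s with rfl | hne
  · rw [if_pos rfl]
    field_simp
    ring
  · rw [if_neg hne]
    field_simp
    ring

end DcandDeriv

section EcandDeriv

variable {L R : Finset ℕ} {lam rho : ℕ → ℝ} {ε y : ℝ} {dc : ℕ}

lemma sumEj_eq (hL2 : ∀ k ∈ L, 2 ≤ k) (hR2 : ∀ k ∈ R, 2 ≤ k) (hdcR : ∀ i ∈ R, i ≤ dc)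
    (hdc2 : 2 ≤ dc) (hrhoSum : ∑ k ∈ R, rho k = 1) {k : ℕ} (hk : k ∈ L)
    (hε : ε ≠ 0) (hy : y ≠ 0) (hP : lamP L lam y ≠ 0) :
    (∑ t ∈ L, Dcand L lam ε k t y) - ∑ j' ∈ Icc 1 (dc - 1), Ecand L R lam rho ε dc k j' y
      = Ecand L R lam rho ε dc k dc y := by
  have hx0 : xF L lam ε y ≠ 0 := mul_ne_zero hε hP
  have he0 : eF L lam ε y ≠ 0 := by unfold eF; exact mul_ne_zero hx0 hy
  have hk2 : 2 ≤ k := hL2 k hk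
  rw [show (∑ j' ∈ Icc 1 (dc - 1), Ecand L R lam rho ε dc k j' y)
      = ∑ j' ∈ Icc 1 (dc - 1),
        (((Ff L lam ε y * ((k : ℝ) * lhat lam ε k y / eF L lam ε y)
            - ε * lhat lam ε k y * (y ^ k - 1)) * (xD L lam ε y / xF L lam ε y)
          - ((k : ℝ) * lhat lam ε k y / eF L lam ε y) *
              ((Fd L lam ε y + xF L lam ε y) / 2 - ε * xF L lam ε y * y ^ k))
            * Gf L R lam rho ε dc j' y
          - (Ff L lam ε y * ((k : ℝ) * lhat lam ε k y / eF L lam ε y)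
              - ε * lhat lam ε k y * (y ^ k - 1)) * (if j' = 1 then (1:ℝ) else 0)) from
    sum_congr rfl fun j' _ => by unfold Ecand; ring]
  rw [sum_sub_distrib, ← mul_sum, ← mul_sum, sum_Gf_eq hR2 hdcR hdc2 hrhoSum hx0]
  rw [show (∑ j' ∈ Icc 1 (dc - 1), if j' = 1 then (1:ℝ) else 0) = 1 from by
    rw [Finset.sum_ite_eq' (Icc 1 (dc - 1)) 1 (fun _ => (1:ℝ)),
      if_pos (by simp only [Finset.mem_Icc]; omega)]]
  rw [sumD_eq hL2 hk hε hy hP]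
  rw [show Ecand L R lam rho ε dc k dc y
      = (Ff L lam ε y * ((k : ℝ) * lhat lam ε k y / eF L lam ε y)
          - ε * lhat lam ε k y * (y ^ k - 1)) *
            ((xD L lam ε y / xF L lam ε y) * Gf L R lam rho ε dc dc y)
        - ((k : ℝ) * lhat lam ε k y / eF L lam ε y) * Gf L R lam rho ε dc dc y *
            ((Fd L lam ε y + xF L lam ε y) / 2 - ε * xF L lam ε y * y ^ k) from by
    unfold Ecand; rw [if_neg (show ¬(dc = 1) by omega)]; ring]
  rw [Fd_eq_Tf]
  unfold lhat eF xF xD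
  rw [show y ^ k = y ^ (k - 1) * y from by rw [← pow_succ]; congr 1; omega ]
  field_simp
  ring

set_option maxHeartbeats 6400000 in
lemma hasDerivAt_Ecand (hL2 : ∀ k ∈ L, 2 ≤ k) (hR2 : ∀ k ∈ R, 2 ≤ k)
    (hdcR : ∀ i ∈ R, i ≤ dc) (hdc2 : 2 ≤ dc) (hrhoSum : ∑ k ∈ R, rho k = 1)
    {k j : ℕ} (hk : k ∈ L) (hj1 : 1 ≤ j) (hjlt : j < dc)
    (hε : ε ≠ 0) (hy : y ≠ 0) (hP : lamP L lam y ≠ 0) :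
    HasDerivAt (fun y => Ecand L R lam rho ε dc k j y)
      (2 * (xD L lam ε y / eF L lam ε y) * Gf L R lam rho ε dc j y *
          ∑ t ∈ L, Dcand L lam ε k t y
        - (Gf L R lam rho ε dc j y / y ^ 2) * ∑ i ∈ L, ((i : ℝ) - 1) * Dcand L lam ε k i y
        - xF L lam ε y * (aF L lam ε y - (k : ℝ)) *
            ((k : ℝ) * lhat lam ε k y / eF L lam ε y) * (Gf L R lam rho ε dc j y / y)
        - ((k : ℝ) * lhat lam ε k y / (eF L lam ε y * y)) *
            ∑ t ∈ L, Ecand L R lam rho ε dc t j y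
        + ((k : ℝ) / y) * Ecand L R lam rho ε dc k j y
        - (j : ℝ) * (xD L lam ε y / xF L lam ε y) *
            ((if j + 1 = dc then
                (∑ t ∈ L, Dcand L lam ε k t y)
                  - ∑ j' ∈ Finset.Icc 1 (dc - 1), Ecand L R lam rho ε dc k j' y
              else Ecand L R lam rho ε dc k (j + 1) y) - Ecand L R lam rho ε dc k j y)) y := by
  have hx0 : xF L lam ε y ≠ 0 := mul_ne_zero hε hP
  have he0 : eF L lam ε y ≠ 0 := by unfold eF; exact mul_ne_zero hx0 hy
  have hk2 : 2 ≤ k := hL2 k hk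
  have hxF : HasDerivAt (fun y => xF L lam ε y) (xD L lam ε y) y :=
    (hasDerivAt_lamP hL2).const_mul ε
  have hxD : HasDerivAt (fun y => xD L lam ε y) (ε * lamDD L lam y) y := by
    unfold xD; exact (hasDerivAt_lamD hL2).const_mul ε
  have he : HasDerivAt (fun y => eF L lam ε y) (xD L lam ε y * y + xF L lam ε y * 1) y := by
    unfold eF
    exact hxF.mul (hasDerivAt_id y)
  have hlk : HasDerivAt (fun y => lhat lam ε k y) (ε * lam k * ((k : ℝ) * y ^ (k - 1))) y := by
    unfold lhat; exact (hasDerivAt_pow k y).const_mul (ε * lam k)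
  have hyk : HasDerivAt (fun y : ℝ => y ^ k) ((k : ℝ) * y ^ (k - 1)) y := hasDerivAt_pow k y
  have hF : HasDerivAt (fun y => Ff L lam ε y) (Fd L lam ε y) y := hasDerivAt_Ff hL2
  have hFd : HasDerivAt (fun y => Fd L lam ε y)
      (2 * ε ^ 2 * (2 * T2f L lam y - Tf L lam y) / y - (ε - (1 - ε)) * xD L lam ε y) y :=
    hasDerivAt_Fd hL2 hy
  have hG : HasDerivAt (fun y => Gf L R lam rho ε dc j y)
      (-(xD L lam ε y / xF L lam ε y) *
          ((j : ℝ) * (Gf L R lam rho ε dc (j + 1) y - Gf L R lam rho ε dc j y)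
            + Gf L R lam rho ε dc j y)
        - (if j = 1 then (1 : ℝ) else 0)) y :=
    hasDerivAt_Gf hL2 hR2 hdcR hdc2 hj1 hjlt hx0
  have hφ : HasDerivAt (fun y => (k : ℝ) * lhat lam ε k y / eF L lam ε y)
      ((((k : ℝ) * (ε * lam k * ((k : ℝ) * y ^ (k - 1)))) * eF L lam ε y
          - (k : ℝ) * lhat lam ε k y * (xD L lam ε y * y + xF L lam ε y * 1))
        / eF L lam ε y ^ 2) y :=
    (hlk.const_mul (k : ℝ)).div he he0
  have hA : HasDerivAt
      (fun y => Ff L lam ε y * ((k : ℝ) * lhat lam ε k y / eF L lam ε y)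
        - ε * lhat lam ε k y * (y ^ k - 1))
      (Fd L lam ε y * ((k : ℝ) * lhat lam ε k y / eF L lam ε y)
        + Ff L lam ε y * ((((k : ℝ) * (ε * lam k * ((k : ℝ) * y ^ (k - 1)))) * eF L lam ε y
            - (k : ℝ) * lhat lam ε k y * (xD L lam ε y * y + xF L lam ε y * 1))
          / eF L lam ε y ^ 2)
        - ((ε * (ε * lam k * ((k : ℝ) * y ^ (k - 1)))) * (y ^ k - 1)
          + (ε * lhat lam ε k y) * ((k : ℝ) * y ^ (k - 1)))) y :=
    (hF.mul hφ).sub ((hlk.const_mul ε).mul (hyk.sub_const 1))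
  have hxdx : HasDerivAt (fun y => xD L lam ε y / xF L lam ε y)
      ((ε * lamDD L lam y * xF L lam ε y - xD L lam ε y * xD L lam ε y) / xF L lam ε y ^ 2) y :=
    hxD.div hxF hx0
  have hB : HasDerivAt
      (fun y => (xD L lam ε y / xF L lam ε y) * Gf L R lam rho ε dc j y
        - (if j = 1 then (1 : ℝ) else 0))
      (((ε * lamDD L lam y * xF L lam ε y - xD L lam ε y * xD L lam ε y) / xF L lam ε y ^ 2)
          * Gf L R lam rho ε dc j y
        + (xD L lam ε y / xF L lam ε y) *
          (-(xD L lam ε y / xF L lam ε y) *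
              ((j : ℝ) * (Gf L R lam rho ε dc (j + 1) y - Gf L R lam rho ε dc j y)
                + Gf L R lam rho ε dc j y)
            - (if j = 1 then (1 : ℝ) else 0))) y :=
    (hxdx.mul hG).sub_const _
  have hψ : HasDerivAt
      (fun y => (Fd L lam ε y + xF L lam ε y) / 2 - ε * xF L lam ε y * y ^ k)
      (((2 * ε ^ 2 * (2 * T2f L lam y - Tf L lam y) / y - (ε - (1 - ε)) * xD L lam ε y)
          + xD L lam ε y) / 2
        - ((ε * xD L lam ε y) * y ^ k + (ε * xF L lam ε y) * ((k : ℝ) * y ^ (k - 1)))) y :=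
    ((hFd.add hxF).div_const 2).sub ((hxF.const_mul ε).mul hyk)
  have hE := (hA.mul hB).sub (((hφ.mul hG).mul hψ))
  have hbranch : (if j + 1 = dc then
        (∑ t ∈ L, Dcand L lam ε k t y)
          - ∑ j' ∈ Finset.Icc 1 (dc - 1), Ecand L R lam rho ε dc k j' y
      else Ecand L R lam rho ε dc k (j + 1) y) = Ecand L R lam rho ε dc k (j + 1) y := by
    split_ifs with h
    · rw [h]; exact sumEj_eq hL2 hR2 hdcR hdc2 hrhoSum hk hε hy hP
    · rfl
  rw [hbranch]
  have hfun : (fun y => Ecand L R lam rho ε dc k j y) = (fun y =>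
      (Ff L lam ε y * ((k : ℝ) * lhat lam ε k y / eF L lam ε y)
          - ε * lhat lam ε k y * (y ^ k - 1)) *
        ((xD L lam ε y / xF L lam ε y) * Gf L R lam rho ε dc j y
          - (if j = 1 then (1 : ℝ) else 0))
      - ((k : ℝ) * lhat lam ε k y / eF L lam ε y) * Gf L R lam rho ε dc j y *
          ((Fd L lam ε y + xF L lam ε y) / 2 - ε * xF L lam ε y * y ^ k)) := by
    funext t; unfold Ecand; rfl
  rw [hfun]
  refine hE.congr_deriv ?_
  rw [show (∑ i ∈ L, ((i : ℝ) - 1) * Dcand L lam ε k i y)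
      = (∑ i ∈ L, (i : ℝ) * Dcand L lam ε k i y) - ∑ i ∈ L, Dcand L lam ε k i y from by
    rw [← sum_sub_distrib]; exact sum_congr rfl fun i _ => by ring]
  rw [sumD_eq hL2 hk hε hy hP, sumDt_eq hL2 hk hε hy hP, sumE_eq hL2 hε hy hP]
  rw [show Ecand L R lam rho ε dc k j y
      = (Ff L lam ε y * ((k : ℝ) * lhat lam ε k y / eF L lam ε y)
          - ε * lhat lam ε k y * (y ^ k - 1)) *
        ((xD L lam ε y / xF L lam ε y) * Gf L R lam rho ε dc j y
          - (if j = 1 then (1 : ℝ) else 0))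
      - ((k : ℝ) * lhat lam ε k y / eF L lam ε y) * Gf L R lam rho ε dc j y *
          ((Fd L lam ε y + xF L lam ε y) / 2 - ε * xF L lam ε y * y ^ k) from by
    unfold Ecand; rfl]
  rw [show Ecand L R lam rho ε dc k (j + 1) y
      = (Ff L lam ε y * ((k : ℝ) * lhat lam ε k y / eF L lam ε y)
          - ε * lhat lam ε k y * (y ^ k - 1)) *
        ((xD L lam ε y / xF L lam ε y) * Gf L R lam rho ε dc (j + 1) y)
      - ((k : ℝ) * lhat lam ε k y / eF L lam ε y) * Gf L R lam rho ε dc (j + 1) y *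
          ((Fd L lam ε y + xF L lam ε y) / 2 - ε * xF L lam ε y * y ^ k) from by
    unfold Ecand; rw [if_neg (show ¬(j + 1 = 1) by omega)]; ring]
  have hDD : lamDD L lam y
      = (Bf L lam y - 3 * y * lamD L lam y - lamP L lam y) / y ^ 2 := by
    rw [eq_div_iff (pow_ne_zero 2 hy)]
    linear_combination lamDD_eq hL2 (lam := lam) (y := y)
  rw [hDD, Fd_eq_Tf]
  simp only [Pi.mul_apply]
  unfold aF lhat eF xF xD
  rw [show y ^ k = y ^ (k - 1) * y from by rw [← pow_succ]; congr 1; omega ]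
  rcases eq_or_ne j 1 with rfl | hne
  · rw [if_pos rfl]
    push_cast
    field_simp
    ring
  · rw [if_neg hne]
    field_simp
    ring

end EcandDeriv

section Gronwall

/-- If `N ≥ 0` on `[y0,1]`, `N 1 = 0`, and `N' ≥ -K N` in the interior, then `N y0 = 0`. -/
lemma gronwall_zero (N : ℝ → ℝ) (K y0 : ℝ) (hy01 : y0 ≤ 1)
    (hc : ContinuousOn N (Set.Icc y0 1))
    (hN : ∀ y ∈ Set.Ioo y0 1, ∃ d, HasDerivAt N d y ∧ -(K * N y) ≤ d)
    (hnn : ∀ y ∈ Set.Icc y0 1, 0 ≤ N y)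
    (hend : N 1 = 0) : N y0 = 0 := by
  set g : ℝ → ℝ := fun y => N y * Real.exp (K * y) with hg
  have hgderiv : ∀ x ∈ Set.Ioo y0 1, ∃ d, HasDerivAt g d x ∧ 0 ≤ d := by
    intro x hx
    obtain ⟨d, hd, hge⟩ := hN x hx
    have hexp : HasDerivAt (fun y : ℝ => Real.exp (K * y)) (Real.exp (K * x) * K) x := by
      have h1 : HasDerivAt (fun y : ℝ => K * y) K x := by
        simpa using (hasDerivAt_id x).const_mul K
      exact (Real.hasDerivAt_exp (K * x)).comp x h1
    refine ⟨d * Real.exp (K * x) + N x * (Real.exp (K * x) * K), hd.mul hexp, ?_⟩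
    have h2 : 0 ≤ (d + K * N x) * Real.exp (K * x) := by
      apply mul_nonneg _ (Real.exp_pos _).le
      linarith
    nlinarith [Real.exp_pos (K * x)]
  have hint : interior (Set.Icc y0 1) = Set.Ioo y0 1 := interior_Icc
  have hgc : ContinuousOn g (Set.Icc y0 1) :=
    hc.mul ((Real.continuous_exp.comp (continuous_const.mul continuous_id)).continuousOn)
  have hmono : MonotoneOn g (Set.Icc y0 1) := by
    apply monotoneOn_of_deriv_nonneg (convex_Icc y0 1) hgc
    · rw [hint]
      intro x hx
      obtain ⟨d, hd, _⟩ := hgderiv x hx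
      exact hd.differentiableAt.differentiableWithinAt
    · rw [hint]
      intro x hx
      obtain ⟨d, hd, hdn⟩ := hgderiv x hx
      rw [hd.deriv]
      exact hdn
  have h1 : g y0 ≤ g 1 :=
    hmono (Set.mem_Icc.mpr ⟨le_refl _, hy01⟩) (Set.mem_Icc.mpr ⟨hy01, le_refl _⟩) hy01
  have h2 : g 1 = 0 := by simp [hg, hend]
  have h3 : 0 ≤ N y0 := hnn y0 (Set.mem_Icc.mpr ⟨le_refl _, hy01⟩)
  have h4 : 0 < Real.exp (K * y0) := Real.exp_pos _
  have h5 : g y0 = N y0 * Real.exp (K * y0) := rfl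
  nlinarith

end Gronwall

section Bounds

variable {L : Finset ℕ} {lam : ℕ → ℝ} {ε y : ℝ}

lemma lamP_le_one (hL2 : ∀ k ∈ L, 2 ≤ k) (hlamPos : ∀ k ∈ L, 0 < lam k)
    (hlamSum : ∑ k ∈ L, lam k = 1) (hy : 0 ≤ y) (hy1 : y ≤ 1) : lamP L lam y ≤ 1 := by
  rw [← hlamSum]
  apply sum_le_sum
  intro k hk
  have h1 : y ^ (k - 1) ≤ 1 := pow_le_one₀ hy hy1
  nlinarith [hlamPos k hk, pow_nonneg hy (k - 1)]

lemma single_le_lamP (hlamPos : ∀ k ∈ L, 0 < lam k) (hy : 0 ≤ y) {s : ℕ} (hs : s ∈ L) :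
    lam s * y ^ (s - 1) ≤ lamP L lam y := by
  apply Finset.single_le_sum (f := fun k => lam k * y ^ (k - 1)) _ hs
  intro k hk
  exact mul_nonneg (hlamPos k hk).le (pow_nonneg hy _)

lemma pow_le_lamP (hL : L.Nonempty) (hL2 : ∀ k ∈ L, 2 ≤ k) (hlamPos : ∀ k ∈ L, 0 < lam k)
    (hlamSum : ∑ k ∈ L, lam k = 1) (hy : 0 ≤ y) (hy1 : y ≤ 1) :
    y ^ (L.max' hL - 1) ≤ lamP L lam y := by
  unfold lamP
  calc y ^ (L.max' hL - 1) = ∑ k ∈ L, lam k * y ^ (L.max' hL - 1) := by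
        rw [← sum_mul, hlamSum, one_mul]
    _ ≤ ∑ k ∈ L, lam k * y ^ (k - 1) := by
        apply sum_le_sum
        intro k hk
        have h1 : y ^ (L.max' hL - 1) ≤ y ^ (k - 1) :=
          pow_le_pow_of_le_one hy hy1 (by have := Finset.le_max' L k hk; omega)
        nlinarith [hlamPos k hk]

lemma lamD_le_max (hL : L.Nonempty) (hL2 : ∀ k ∈ L, 2 ≤ k) (hlamPos : ∀ k ∈ L, 0 < lam k)
    (hlamSum : ∑ k ∈ L, lam k = 1) (hy : 0 ≤ y) (hy1 : y ≤ 1) :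
    lamD L lam y ≤ (L.max' hL : ℝ) := by
  unfold lamD
  calc ∑ k ∈ L, ((k : ℝ) - 1) * lam k * y ^ (k - 2)
      ≤ ∑ k ∈ L, (L.max' hL : ℝ) * lam k := by
        apply sum_le_sum
        intro k hk
        have h2 := hL2 k hk
        have h3 := Finset.le_max' L k hk
        have h4 : y ^ (k - 2) ≤ 1 := pow_le_one₀ hy hy1
        have h5 : ((k : ℝ) - 1) ≤ (L.max' hL : ℝ) := by
          have : (k : ℝ) ≤ (L.max' hL : ℝ) := by exact_mod_cast h3
          linarith
        have hk1 : (1:ℝ) ≤ (k : ℝ) - 1 := by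
          have : (2:ℝ) ≤ (k : ℝ) := by exact_mod_cast h2
          linarith
        have e1 : ((k : ℝ) - 1) * lam k * y ^ (k - 2) ≤ ((k : ℝ) - 1) * lam k := by
          have hnn : 0 ≤ (((k : ℝ) - 1) * lam k) * (1 - y ^ (k - 2)) :=
            mul_nonneg (mul_nonneg (by linarith) (hlamPos k hk).le) (by linarith)
          nlinarith
        have e2 : ((k : ℝ) - 1) * lam k ≤ (L.max' hL : ℝ) * lam k :=
          mul_le_mul_of_nonneg_right h5 (hlamPos k hk).le
        linarith
    _ = (L.max' hL : ℝ) := by rw [← mul_sum, hlamSum, mul_one]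

lemma lamD_nonneg (hL2 : ∀ k ∈ L, 2 ≤ k) (hlamPos : ∀ k ∈ L, 0 < lam k) (hy : 0 ≤ y) :
    0 ≤ lamD L lam y := by
  apply sum_nonneg
  intro k hk
  have h2 := hL2 k hk
  have : (1:ℝ) ≤ (k:ℝ) := by exact_mod_cast Nat.one_le_of_lt h2
  apply mul_nonneg (mul_nonneg (by linarith) (hlamPos k hk).le) (pow_nonneg hy _)

end Bounds

/-- homogeneous VV vector field -/
noncomputable def Wvv (L : Finset ℕ) (lam : ℕ → ℝ) (ε y : ℝ) (Δv : ℕ → ℕ → ℝ) (k s : ℕ) : ℝ :=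
  -(xF L lam ε y) *
    (((s : ℝ) * lhat lam ε s y / eF L lam ε y ^ 2) * ∑ t ∈ L, Δv k t
      + ((k : ℝ) * lhat lam ε k y / eF L lam ε y ^ 2) * ∑ t ∈ L, Δv s t
      - (((k : ℝ) + (s : ℝ)) / eF L lam ε y) * Δv k s)

section VVUnique

variable {L : Finset ℕ} {lam : ℕ → ℝ} {ε : ℝ}

lemma bound_helper {c C u M : ℝ} (hc0 : 0 ≤ c) (hcC : c ≤ C) (hu : |u| ≤ M) :
    -(C * M) ≤ c * u ∧ c * u ≤ C * M := by
  have hM : 0 ≤ M := le_trans (abs_nonneg _) hu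
  have h1 : c * (-|u|) ≤ c * u := mul_le_mul_of_nonneg_left (neg_abs_le u) hc0
  have h1' : c * u ≤ c * |u| := mul_le_mul_of_nonneg_left (le_abs_self u) hc0
  have h2 : c * |u| ≤ c * M := mul_le_mul_of_nonneg_left hu hc0
  have h3 : c * M ≤ C * M := mul_le_mul_of_nonneg_right hcC hM
  constructor <;> nlinarith

lemma coef1_bound (hL : L.Nonempty) (hL2 : ∀ k ∈ L, 2 ≤ k) (hlamPos : ∀ k ∈ L, 0 < lam k)
    (hεp : 0 < ε) {y : ℝ} (hy : 0 < y) (hy1 : y ≤ 1) {s : ℕ} (hs : s ∈ L) :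
    0 ≤ xF L lam ε y * ((s : ℝ) * lhat lam ε s y / eF L lam ε y ^ 2)
      ∧ xF L lam ε y * ((s : ℝ) * lhat lam ε s y / eF L lam ε y ^ 2) ≤ (s : ℝ) / y := by
  have hP : 0 < lamP L lam y := lamP_pos hL hL2 hlamPos hy
  have hs2 := hL2 s hs
  have hEq : xF L lam ε y * ((s : ℝ) * lhat lam ε s y / eF L lam ε y ^ 2)
      = (s : ℝ) * (lam s * y ^ (s - 1)) / (lamP L lam y * y) := by
    unfold lhat eF xF
    rw [show y ^ s = y ^ (s - 1) * y from by rw [← pow_succ]; congr 1; omega]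
    field_simp
  rw [hEq]
  have hls := hlamPos s hs
  constructor
  · positivity
  · rw [div_le_div_iff₀ (by positivity) hy]
    have h1 : lam s * y ^ (s - 1) ≤ lamP L lam y := single_le_lamP hlamPos hy.le hs
    have h2 : (0:ℝ) ≤ (s:ℝ) := by positivity
    nlinarith [mul_le_mul_of_nonneg_left (mul_le_mul_of_nonneg_right h1 hy.le) h2]

lemma absDS_le {Δv : ℕ → ℕ → ℝ} {Nv : ℝ} (hNv : Nv = ∑ k ∈ L, ∑ s ∈ L, (Δv k s) ^ 2)
    {a b c : ℕ} (ha : a ∈ L) (hb : b ∈ L) (hc : c ∈ L) :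
    |Δv a b * ∑ t ∈ L, Δv c t| ≤ (L.card : ℝ) * Nv := by
  have hsq : ∀ u ∈ L, ∀ v ∈ L, (Δv u v) ^ 2 ≤ Nv := by
    intro u hu v hv
    rw [hNv]
    calc (Δv u v) ^ 2 ≤ ∑ s ∈ L, (Δv u s) ^ 2 :=
          Finset.single_le_sum (f := fun s => (Δv u s) ^ 2) (fun i _ => sq_nonneg _) hv
      _ ≤ ∑ k ∈ L, ∑ s ∈ L, (Δv k s) ^ 2 :=
          Finset.single_le_sum (f := fun k => ∑ s ∈ L, (Δv k s) ^ 2)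
            (fun i _ => Finset.sum_nonneg fun j _ => sq_nonneg _) hu
  have habs : ∀ u ∈ L, ∀ v ∈ L, ∀ w ∈ L, ∀ z ∈ L, |Δv u v * Δv w z| ≤ Nv := by
    intro u hu v hv w hw z hz
    rw [abs_mul]
    have h1 := hsq u hu v hv
    have h2 := hsq w hw z hz
    have h3 := sq_abs (Δv u v)
    have h4 := sq_abs (Δv w z)
    nlinarith [abs_nonneg (Δv u v), abs_nonneg (Δv w z), sq_nonneg (|Δv u v| - |Δv w z|)]
  rw [mul_sum]
  calc |∑ t ∈ L, Δv a b * Δv c t| ≤ ∑ t ∈ L, |Δv a b * Δv c t| := Finset.abs_sum_le_sum_abs _ _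
    _ ≤ ∑ _t ∈ L, Nv := Finset.sum_le_sum fun t ht => habs a ha b hb c hc t ht
    _ = (L.card : ℝ) * Nv := by rw [Finset.sum_const, nsmul_eq_mul]

lemma Wvv_bound (hL : L.Nonempty) (hL2 : ∀ k ∈ L, 2 ≤ k) (hlamPos : ∀ k ∈ L, 0 < lam k)
    (hεp : 0 < ε) {y0 y : ℝ} (hy0 : 0 < y0) (hy0y : y0 ≤ y) (hy1 : y ≤ 1)
    (Δv : ℕ → ℕ → ℝ) {k s : ℕ} (hk : k ∈ L) (hs : s ∈ L) :
    -((4 * (L.max' hL : ℝ) * (L.card : ℝ) / y0) * (∑ k ∈ L, ∑ s ∈ L, (Δv k s) ^ 2))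
      ≤ 2 * Δv k s * Wvv L lam ε y Δv k s := by
  set Nv := ∑ k ∈ L, ∑ s ∈ L, (Δv k s) ^ 2 with hNv
  have hy : 0 < y := lt_of_lt_of_le hy0 hy0y
  have hNvnn : 0 ≤ Nv := Finset.sum_nonneg fun i _ => Finset.sum_nonneg fun j _ => sq_nonneg _
  have hcard1 : (1:ℝ) ≤ (L.card : ℝ) := by
    have := Finset.card_pos.mpr hL
    exact_mod_cast this
  have hdM : ∀ u ∈ L, (u : ℝ) ≤ (L.max' hL : ℝ) := fun u hu => by
    exact_mod_cast Finset.le_max' L u hu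
  have hdM2 : (2:ℝ) ≤ (L.max' hL : ℝ) := le_trans (by exact_mod_cast hL2 _ (L.max'_mem hL)) (le_refl _)
  have hyinv : (1:ℝ) / y ≤ 1 / y0 := by
    apply div_le_div_of_nonneg_left (by norm_num) hy0 hy0y
  -- coefficient bounds
  obtain ⟨hc1nn, hc1le⟩ := coef1_bound hL hL2 hlamPos hεp hy hy1 hs
  obtain ⟨hc2nn, hc2le⟩ := coef1_bound hL hL2 hlamPos hεp hy hy1 hk
  have hCb : ∀ u : ℕ, u ∈ L → (u : ℝ) / y ≤ (L.max' hL : ℝ) / y0 := by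
    intro u hu
    apply div_le_div₀ (by positivity) (hdM u hu) hy0 hy0y
  -- expand W
  have hW : 2 * Δv k s * Wvv L lam ε y Δv k s
      = -2 * ((xF L lam ε y * ((s : ℝ) * lhat lam ε s y / eF L lam ε y ^ 2))
            * (Δv k s * ∑ t ∈ L, Δv k t))
        - 2 * ((xF L lam ε y * ((k : ℝ) * lhat lam ε k y / eF L lam ε y ^ 2))
            * (Δv k s * ∑ t ∈ L, Δv s t))
        + 2 * ((xF L lam ε y * (((k : ℝ) + (s : ℝ)) / eF L lam ε y)) * (Δv k s) ^ 2) := by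
    unfold Wvv; ring
  rw [hW]
  set M := (L.max' hL : ℝ) with hM
  have hb1 : (xF L lam ε y * ((s : ℝ) * lhat lam ε s y / eF L lam ε y ^ 2))
          * (Δv k s * ∑ t ∈ L, Δv k t) ≤ (M / y0) * ((L.card : ℝ) * Nv) :=
    (bound_helper hc1nn (le_trans hc1le (hCb s hs)) (absDS_le hNv hk hs hk)).2
  have hb2 : (xF L lam ε y * ((k : ℝ) * lhat lam ε k y / eF L lam ε y ^ 2))
          * (Δv k s * ∑ t ∈ L, Δv s t) ≤ (M / y0) * ((L.card : ℝ) * Nv) :=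
    (bound_helper hc2nn (le_trans hc2le (hCb k hk)) (absDS_le hNv hk hs hs)).2
  have hb3 : 0 ≤ (xF L lam ε y * (((k : ℝ) + (s : ℝ)) / eF L lam ε y)) * (Δv k s) ^ 2 := by
    have hP : 0 < lamP L lam y := lamP_pos hL hL2 hlamPos hy
    have he : 0 < eF L lam ε y := by
      unfold eF xF; positivity
    have hx : 0 < xF L lam ε y := by unfold xF; positivity
    have : (0:ℝ) ≤ (k:ℝ) + (s:ℝ) := by positivity
    positivity
  have hgoal : -(4 * M * (L.card : ℝ) / y0 * Nv)
      = -2 * ((M / y0) * ((L.card : ℝ) * Nv)) - 2 * ((M / y0) * ((L.card : ℝ) * Nv)) := by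
    ring
  rw [hgoal]
  linarith [hb1, hb2, hb3]

end VVUnique

section VVU2

variable {L : Finset ℕ} {lam : ℕ → ℝ} {ε : ℝ}

lemma vv_unique (hL : L.Nonempty) (hL2 : ∀ k ∈ L, 2 ≤ k) (hlamPos : ∀ k ∈ L, 0 < lam k)
    (hlamSum : ∑ k ∈ L, lam k = 1) (hεp : 0 < ε) (hε1 : ε < 1)
    {δll : ℕ → ℕ → ℝ → ℝ} (hvv : CEvv L lam ε δll) :
    ∀ k ∈ L, ∀ s ∈ L, ∀ y ∈ Set.Ioc (0:ℝ) 1, δll k s y = Dcand L lam ε k s y := by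
  intro k0 hk0 s0 hs0 y0 hy0I
  obtain ⟨hy0, hy01⟩ := hy0I
  set Δ : ℕ → ℕ → ℝ → ℝ := fun k s t => δll k s t - Dcand L lam ε k s t with hΔ
  set N : ℝ → ℝ := fun t => ∑ k ∈ L, ∑ s ∈ L, (Δ k s t) ^ 2 with hN
  set K : ℝ := (L.card : ℝ) ^ 2 * (4 * (L.max' hL : ℝ) * (L.card : ℝ) / y0) with hK
  have hsub : Set.Icc y0 1 ⊆ Set.Ioc (0:ℝ) 1 := fun t ht => ⟨lt_of_lt_of_le hy0 ht.1, ht.2⟩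
  have hNcont : ContinuousOn N (Set.Icc y0 1) := by
    apply continuousOn_finset_sum
    intro k hk
    apply continuousOn_finset_sum
    intro s hs
    have hδc : ContinuousOn (δll k s) (Set.Icc y0 1) := by
      intro t ht
      exact ((hvv.1 k hk s hs t (hsub ht)).continuousWithinAt).mono hsub
    have hDc : ContinuousOn (fun t => Dcand L lam ε k s t) (Set.Icc y0 1) := by
      intro t ht
      have htI := hsub ht
      have hP : lamP L lam t ≠ 0 :=
        (lamP_pos hL hL2 hlamPos htI.1).ne'
      exact (hasDerivAt_Dcand hL2 hk hs hεp.ne' htI.1.ne' hP).continuousAt.continuousWithinAt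
    exact (hδc.sub hDc).pow 2
  have hΔ1 : ∀ k ∈ L, ∀ s ∈ L, Δ k s 1 = 0 := by
    intro k hk s hs
    simp only [hΔ]
    rw [hvv.2 k hk s hs, Dcand_one hεp.ne' hlamSum]
    ring
  have hN1 : N 1 = 0 := by
    simp only [hN]
    apply sum_eq_zero
    intro k hk
    apply sum_eq_zero
    intro s hs
    rw [hΔ1 k hk s hs]
    ring
  have hNnn : ∀ t ∈ Set.Icc y0 1, 0 ≤ N t := fun t _ =>
    Finset.sum_nonneg fun i _ => Finset.sum_nonneg fun j _ => sq_nonneg _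
  have hNder : ∀ t ∈ Set.Ioo y0 1, ∃ d, HasDerivAt N d t ∧ -(K * N t) ≤ d := by
    intro t ht
    have htI : t ∈ Set.Ioc (0:ℝ) 1 := ⟨lt_of_lt_of_le hy0 ht.1.le, ht.2.le⟩
    have htpos : 0 < t := htI.1
    have hP : lamP L lam t ≠ 0 := (lamP_pos hL hL2 hlamPos htpos).ne'
    have hder : ∀ k ∈ L, ∀ s ∈ L, HasDerivAt (fun u => Δ k s u)
        (Wvv L lam ε t (fun a b => Δ a b t) k s) t := by
      intro k hk s hs
      have h1 := (hvv.1 k hk s hs t htI).hasDerivAt (Ioc_mem_nhds htpos ht.2)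
      have h2 := hasDerivAt_Dcand (y := t) hL2 hk hs hεp.ne' htpos.ne' hP
      refine (h1.sub h2).congr_deriv ?_
      unfold Wvv
      simp only [hΔ]
      rw [sum_sub_distrib, sum_sub_distrib]
      ring
    refine ⟨∑ k ∈ L, ∑ s ∈ L, 2 * Δ k s t * Wvv L lam ε t (fun a b => Δ a b t) k s, ?_, ?_⟩
    · simp only [hN]
      apply HasDerivAt.fun_sum
      intro k hk
      apply HasDerivAt.fun_sum
      intro s hs
      exact ((hder k hk s hs).pow 2).congr_deriv (by push_cast; ring)
    · have hb : ∀ k ∈ L, ∀ s ∈ L,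
          -((4 * (L.max' hL : ℝ) * (L.card : ℝ) / y0) * N t)
            ≤ 2 * Δ k s t * Wvv L lam ε t (fun a b => Δ a b t) k s := by
        intro k hk s hs
        have := Wvv_bound hL hL2 hlamPos hεp hy0 ht.1.le ht.2.le
          (fun a b => Δ a b t) hk hs
        simpa only [hN] using this
      calc -(K * N t)
          = ∑ _k ∈ L, ∑ _s ∈ L, -((4 * (L.max' hL : ℝ) * (L.card : ℝ) / y0) * N t) := by
            rw [Finset.sum_const, Finset.sum_const, nsmul_eq_mul, nsmul_eq_mul, hK]
            ring
        _ ≤ ∑ k ∈ L, ∑ s ∈ L, 2 * Δ k s t * Wvv L lam ε t (fun a b => Δ a b t) k s := by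
            apply sum_le_sum
            intro k hk
            apply sum_le_sum
            intro s hs
            exact hb k hk s hs
  have h0 := gronwall_zero N K y0 hy01 hNcont hNder hNnn hN1
  have hsq : (Δ k0 s0 y0) ^ 2 = 0 := by
    have h1 : ∑ s ∈ L, (Δ k0 s y0) ^ 2 = 0 := by
      have := (Finset.sum_eq_zero_iff_of_nonneg
        (fun i (_ : i ∈ L) => Finset.sum_nonneg fun j _ => sq_nonneg (Δ i j y0))).mp h0
      exact this k0 hk0
    exact (Finset.sum_eq_zero_iff_of_nonneg
      (fun j (_ : j ∈ L) => sq_nonneg (Δ k0 j y0))).mp h1 s0 hs0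
  have : Δ k0 s0 y0 = 0 := by
    exact pow_eq_zero_iff (two_ne_zero) |>.mp hsq
  simp only [hΔ] at this
  linarith

end VVU2

/-- homogeneous VC vector field -/
noncomputable def Wvc (L : Finset ℕ) (lam : ℕ → ℝ) (ε y : ℝ) (dc : ℕ)
    (Δv : ℕ → ℕ → ℝ) (k j : ℕ) : ℝ :=
  -((k : ℝ) * lhat lam ε k y / (eF L lam ε y * y)) * ∑ t ∈ L, Δv t j
    + ((k : ℝ) / y) * Δv k j
    - (j : ℝ) * (xD L lam ε y / xF L lam ε y) *
        ((if j + 1 = dc then -∑ j' ∈ Finset.Icc 1 (dc - 1), Δv k j' else Δv k (j + 1)) - Δv k j)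

section VCU

variable {L : Finset ℕ} {lam : ℕ → ℝ} {ε : ℝ} {dc : ℕ}

lemma abs_mul_le_of_sq {u v Nv : ℝ} (hu : u ^ 2 ≤ Nv) (hv : v ^ 2 ≤ Nv) : |u * v| ≤ Nv := by
  rw [abs_mul]
  have h3 := sq_abs u
  have h4 := sq_abs v
  nlinarith [abs_nonneg u, abs_nonneg v, sq_nonneg (|u| - |v|)]

set_option maxHeartbeats 1600000 in
lemma Wvc_bound (hL : L.Nonempty) (hL2 : ∀ k ∈ L, 2 ≤ k) (hlamPos : ∀ k ∈ L, 0 < lam k)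
    (hlamSum : ∑ k ∈ L, lam k = 1) (hεp : 0 < ε) (hdc2 : 2 ≤ dc)
    {y0 y : ℝ} (hy0 : 0 < y0) (hy0y : y0 ≤ y) (hy1 : y ≤ 1)
    (Δv : ℕ → ℕ → ℝ) {k j : ℕ} (hk : k ∈ L) (hj : j ∈ Finset.Icc 1 (dc - 1)) :
    -((2 * ((L.max' hL : ℝ) / y0) * (L.card : ℝ)
        + 2 * ((dc : ℝ) * (L.max' hL : ℝ) / y0 ^ (L.max' hL - 1)) * ((dc : ℝ) + 1))
      * (∑ k ∈ L, ∑ j ∈ Finset.Icc 1 (dc - 1), (Δv k j) ^ 2))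
      ≤ 2 * Δv k j * Wvc L lam ε y dc Δv k j := by
  set Nv := ∑ k ∈ L, ∑ j ∈ Finset.Icc 1 (dc - 1), (Δv k j) ^ 2 with hNv
  simp only [Finset.mem_Icc] at hj
  have hy : 0 < y := lt_of_lt_of_le hy0 hy0y
  have hP : 0 < lamP L lam y := lamP_pos hL hL2 hlamPos hy
  have hNvnn : 0 ≤ Nv := Finset.sum_nonneg fun i _ => Finset.sum_nonneg fun j _ => sq_nonneg _
  have hsq : ∀ u ∈ L, ∀ v ∈ Finset.Icc 1 (dc - 1), (Δv u v) ^ 2 ≤ Nv := by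
    intro u hu v hv
    calc (Δv u v) ^ 2 ≤ ∑ j ∈ Finset.Icc 1 (dc - 1), (Δv u j) ^ 2 :=
          Finset.single_le_sum (f := fun j => (Δv u j) ^ 2) (fun i _ => sq_nonneg _) hv
      _ ≤ Nv := Finset.single_le_sum (f := fun k => ∑ j ∈ Finset.Icc 1 (dc - 1), (Δv k j) ^ 2)
          (fun i _ => Finset.sum_nonneg fun t _ => sq_nonneg _) hu
  have hjmem : j ∈ Finset.Icc 1 (dc - 1) := Finset.mem_Icc.mpr hj
  -- coefficient 1 : k lhat/(e y) = xF * (k lhat / e²)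
  have hc4eq : (k : ℝ) * lhat lam ε k y / (eF L lam ε y * y)
      = xF L lam ε y * ((k : ℝ) * lhat lam ε k y / eF L lam ε y ^ 2) := by
    have he0 : eF L lam ε y ≠ 0 := by unfold eF xF; positivity
    have hx0 : xF L lam ε y ≠ 0 := by unfold xF; positivity
    unfold eF
    field_simp
  obtain ⟨hc4nn, hc4le⟩ := coef1_bound hL hL2 hlamPos hεp hy hy1 hk
  have hdMk : (k : ℝ) ≤ (L.max' hL : ℝ) := by exact_mod_cast Finset.le_max' L k hk
  have hc4le' : xF L lam ε y * ((k : ℝ) * lhat lam ε k y / eF L lam ε y ^ 2)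
      ≤ (L.max' hL : ℝ) / y0 :=
    le_trans hc4le (div_le_div₀ (by positivity) hdMk hy0 hy0y)
  -- coefficient 2 : j * xD/xF
  have hxdnn : 0 ≤ xD L lam ε y / xF L lam ε y := by
    apply div_nonneg
    · unfold xD; exact mul_nonneg hεp.le (lamD_nonneg hL2 hlamPos hy.le)
    · unfold xF; positivity
  have hxdle : xD L lam ε y / xF L lam ε y ≤ (L.max' hL : ℝ) / y0 ^ (L.max' hL - 1) := by
    have h1 : xD L lam ε y / xF L lam ε y = lamD L lam y / lamP L lam y := by
      unfold xD xF
      rw [mul_div_mul_left _ _ hεp.ne']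
    rw [h1]
    have h2 : y0 ^ (L.max' hL - 1) ≤ lamP L lam y :=
      le_trans (pow_le_pow_left₀ hy0.le hy0y _) (pow_le_lamP hL hL2 hlamPos hlamSum hy.le hy1)
    exact div_le_div₀ (by positivity) (lamD_le_max hL hL2 hlamPos hlamSum hy.le hy1)
      (by positivity) h2
  have hjd : (j : ℝ) ≤ (dc : ℝ) := by
    have : j ≤ dc := by omega
    exact_mod_cast this
  have hC3nn : 0 ≤ (j : ℝ) * (xD L lam ε y / xF L lam ε y) := by positivity
  have hC3le : (j : ℝ) * (xD L lam ε y / xF L lam ε y)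
      ≤ (dc : ℝ) * ((L.max' hL : ℝ) / y0 ^ (L.max' hL - 1)) :=
    mul_le_mul hjd hxdle hxdnn (by positivity)
  -- products
  have habs1 : |Δv k j * ∑ t ∈ L, Δv t j| ≤ (L.card : ℝ) * Nv := by
    rw [mul_sum]
    calc |∑ t ∈ L, Δv k j * Δv t j| ≤ ∑ t ∈ L, |Δv k j * Δv t j| :=
          Finset.abs_sum_le_sum_abs _ _
      _ ≤ ∑ _t ∈ L, Nv := Finset.sum_le_sum fun t ht =>
          abs_mul_le_of_sq (hsq k hk j hjmem) (hsq t ht j hjmem)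
      _ = (L.card : ℝ) * Nv := by rw [Finset.sum_const, nsmul_eq_mul]
  have habsbr : |Δv k j * ((if j + 1 = dc then
        -∑ j' ∈ Finset.Icc 1 (dc - 1), Δv k j' else Δv k (j + 1)) - Δv k j)|
      ≤ ((dc : ℝ) + 1) * Nv := by
    have hself : |Δv k j * Δv k j| ≤ Nv := abs_mul_le_of_sq (hsq k hk j hjmem) (hsq k hk j hjmem)
    have hbr : |Δv k j * (if j + 1 = dc then
        -∑ j' ∈ Finset.Icc 1 (dc - 1), Δv k j' else Δv k (j + 1))| ≤ (dc : ℝ) * Nv := by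
      split_ifs with h
      · rw [mul_neg, abs_neg, mul_sum]
        calc |∑ j' ∈ Finset.Icc 1 (dc - 1), Δv k j * Δv k j'|
            ≤ ∑ j' ∈ Finset.Icc 1 (dc - 1), |Δv k j * Δv k j'| :=
              Finset.abs_sum_le_sum_abs _ _
          _ ≤ ∑ _j' ∈ Finset.Icc 1 (dc - 1), Nv := Finset.sum_le_sum fun t ht =>
              abs_mul_le_of_sq (hsq k hk j hjmem) (hsq k hk t ht)
          _ = ((Finset.Icc 1 (dc - 1)).card : ℝ) * Nv := by
              rw [Finset.sum_const, nsmul_eq_mul]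
          _ ≤ (dc : ℝ) * Nv := by
              apply mul_le_mul_of_nonneg_right _ hNvnn
              rw [Nat.card_Icc]
              have : dc - 1 + 1 - 1 ≤ dc := by omega
              exact_mod_cast this
      · have hmem : j + 1 ∈ Finset.Icc 1 (dc - 1) := Finset.mem_Icc.mpr (by omega)
        calc |Δv k j * Δv k (j + 1)| ≤ Nv :=
              abs_mul_le_of_sq (hsq k hk j hjmem) (hsq k hk (j + 1) hmem)
          _ ≤ (dc : ℝ) * Nv := by
              have hdc1 : (1:ℝ) ≤ (dc:ℝ) := by exact_mod_cast (show 1 ≤ dc by omega)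
              nlinarith [hNvnn]
    calc |Δv k j * ((if j + 1 = dc then
          -∑ j' ∈ Finset.Icc 1 (dc - 1), Δv k j' else Δv k (j + 1)) - Δv k j)|
        ≤ |Δv k j * (if j + 1 = dc then
            -∑ j' ∈ Finset.Icc 1 (dc - 1), Δv k j' else Δv k (j + 1))| + |Δv k j * Δv k j| := by
          rw [mul_sub]
          exact abs_sub _ _
      _ ≤ (dc : ℝ) * Nv + Nv := add_le_add hbr hself
      _ ≤ ((dc : ℝ) + 1) * Nv := by nlinarith
  -- expand
  have hW : 2 * Δv k j * Wvc L lam ε y dc Δv k j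
      = -2 * ((xF L lam ε y * ((k : ℝ) * lhat lam ε k y / eF L lam ε y ^ 2))
            * (Δv k j * ∑ t ∈ L, Δv t j))
        + 2 * (((k : ℝ) / y) * (Δv k j) ^ 2)
        - 2 * (((j : ℝ) * (xD L lam ε y / xF L lam ε y))
            * (Δv k j * ((if j + 1 = dc then
                -∑ j' ∈ Finset.Icc 1 (dc - 1), Δv k j' else Δv k (j + 1)) - Δv k j))) := by
    unfold Wvc
    rw [hc4eq]
    ring
  rw [hW]
  have hb1 := (bound_helper hc4nn hc4le' habs1).2
  have hb2 : 0 ≤ ((k : ℝ) / y) * (Δv k j) ^ 2 := by positivity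
  have hb3 := (bound_helper hC3nn hC3le habsbr).1
  have hb3' := (bound_helper hC3nn hC3le habsbr).2
  have hexp : -((2 * ((L.max' hL : ℝ) / y0) * (L.card : ℝ)
        + 2 * ((dc : ℝ) * (L.max' hL : ℝ) / y0 ^ (L.max' hL - 1)) * ((dc : ℝ) + 1)) * Nv)
      ≤ -2 * (((L.max' hL : ℝ) / y0) * ((L.card : ℝ) * Nv))
        - 2 * (((dc : ℝ) * ((L.max' hL : ℝ) / y0 ^ (L.max' hL - 1))) * (((dc : ℝ) + 1) * Nv))
        + 2 * 0 :=
    le_of_eq (by ring)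
  refine le_trans hexp ?_
  linarith [hb1, hb2, hb3, hb3']

end VCU

section VCU2

variable {L R : Finset ℕ} {lam rho : ℕ → ℝ} {ε : ℝ} {dc : ℕ}

lemma vc_unique (hL : L.Nonempty) (hL2 : ∀ k ∈ L, 2 ≤ k) (hlamPos : ∀ k ∈ L, 0 < lam k)
    (hlamSum : ∑ k ∈ L, lam k = 1) (hR2 : ∀ k ∈ R, 2 ≤ k) (hrhoSum : ∑ k ∈ R, rho k = 1)
    (hdcR : ∀ i ∈ R, i ≤ dc) (hdc2 : 2 ≤ dc) (hεp : 0 < ε) (hε1 : ε < 1)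
    {δll δlr : ℕ → ℕ → ℝ → ℝ} (hvv : CEvv L lam ε δll)
    (hvc : CEvc L R lam rho ε dc δll δlr) :
    ∀ k ∈ L, ∀ j ∈ Finset.Icc 1 (dc - 1), ∀ y ∈ Set.Ioc (0:ℝ) 1,
      δlr k j y = Ecand L R lam rho ε dc k j y := by
  have hll := vv_unique hL hL2 hlamPos hlamSum hεp hε1 hvv
  intro k0 hk0 j0 hj0 y0 hy0I
  obtain ⟨hy0, hy01⟩ := hy0I
  set Δ : ℕ → ℕ → ℝ → ℝ := fun k j t => δlr k j t - Ecand L R lam rho ε dc k j t with hΔ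
  set N : ℝ → ℝ := fun t => ∑ k ∈ L, ∑ j ∈ Finset.Icc 1 (dc - 1), (Δ k j t) ^ 2 with hN
  set Ku : ℝ := 2 * ((L.max' hL : ℝ) / y0) * (L.card : ℝ)
    + 2 * ((dc : ℝ) * (L.max' hL : ℝ) / y0 ^ (L.max' hL - 1)) * ((dc : ℝ) + 1) with hKu
  set K : ℝ := (L.card : ℝ) * (((Finset.Icc 1 (dc - 1)).card : ℝ)) * Ku with hK
  have hsub : Set.Icc y0 1 ⊆ Set.Ioc (0:ℝ) 1 := fun t ht => ⟨lt_of_lt_of_le hy0 ht.1, ht.2⟩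
  have hNcont : ContinuousOn N (Set.Icc y0 1) := by
    apply continuousOn_finset_sum
    intro k hk
    apply continuousOn_finset_sum
    intro j hj
    simp only [Finset.mem_Icc] at hj
    have hδc : ContinuousOn (δlr k j) (Set.Icc y0 1) := by
      intro t ht
      exact ((hvc.1 k hk j (Finset.mem_Icc.mpr hj) t (hsub ht)).continuousWithinAt).mono hsub
    have hEc : ContinuousOn (fun t => Ecand L R lam rho ε dc k j t) (Set.Icc y0 1) := by
      intro t ht
      have htI := hsub ht
      have hP : lamP L lam t ≠ 0 := (lamP_pos hL hL2 hlamPos htI.1).ne'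
      exact (hasDerivAt_Ecand hL2 hR2 hdcR hdc2 hrhoSum hk hj.1 (by omega) hεp.ne'
        htI.1.ne' hP).continuousAt.continuousWithinAt
    exact (hδc.sub hEc).pow 2
  have hN1 : N 1 = 0 := by
    simp only [hN]
    apply sum_eq_zero
    intro k hk
    apply sum_eq_zero
    intro j hj
    simp only [hΔ]
    rw [hvc.2 k hk j hj, Ecand_one hεp.ne' hlamSum]
    ring
  have hNnn : ∀ t ∈ Set.Icc y0 1, 0 ≤ N t := fun t _ =>
    Finset.sum_nonneg fun i _ => Finset.sum_nonneg fun j _ => sq_nonneg _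
  have hNder : ∀ t ∈ Set.Ioo y0 1, ∃ d, HasDerivAt N d t ∧ -(K * N t) ≤ d := by
    intro t ht
    have htI : t ∈ Set.Ioc (0:ℝ) 1 := ⟨lt_of_lt_of_le hy0 ht.1.le, ht.2.le⟩
    have htpos : 0 < t := htI.1
    have hP : lamP L lam t ≠ 0 := (lamP_pos hL hL2 hlamPos htpos).ne'
    have hder : ∀ k ∈ L, ∀ j ∈ Finset.Icc 1 (dc - 1), HasDerivAt (fun u => Δ k j u)
        (Wvc L lam ε t dc (fun a b => Δ a b t) k j) t := by
      intro k hk j hj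
      have hjm := hj
      simp only [Finset.mem_Icc] at hjm
      have h1 := (hvc.1 k hk j hj t htI).hasDerivAt (Ioc_mem_nhds htpos ht.2)
      have h2 := hasDerivAt_Ecand (y := t) hL2 hR2 hdcR hdc2 hrhoSum hk hjm.1 (by omega)
        hεp.ne' htpos.ne' hP
      refine (h1.sub h2).congr_deriv ?_
      have hllsum : (∑ t' ∈ L, δll k t' t) = ∑ t' ∈ L, Dcand L lam ε k t' t :=
        sum_congr rfl fun a ha => hll k hk a ha t htI
      have hllsum2 : (∑ i ∈ L, ((i : ℝ) - 1) * δll k i t)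
          = ∑ i ∈ L, ((i : ℝ) - 1) * Dcand L lam ε k i t :=
        sum_congr rfl fun a ha => by rw [hll k hk a ha t htI]
      rw [hllsum, hllsum2]
      unfold Wvc
      simp only [hΔ]
      rcases eq_or_ne (j + 1) dc with hcase | hcase
      · simp only [if_pos hcase]
        rw [sum_sub_distrib, sum_sub_distrib]
        ring
      · simp only [if_neg hcase]
        rw [sum_sub_distrib]
        ring
    refine ⟨∑ k ∈ L, ∑ j ∈ Finset.Icc 1 (dc - 1),
      2 * Δ k j t * Wvc L lam ε t dc (fun a b => Δ a b t) k j, ?_, ?_⟩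
    · simp only [hN]
      apply HasDerivAt.fun_sum
      intro k hk
      apply HasDerivAt.fun_sum
      intro j hj
      exact ((hder k hk j hj).pow 2).congr_deriv (by push_cast; ring)
    · have hb : ∀ k ∈ L, ∀ j ∈ Finset.Icc 1 (dc - 1),
          -(Ku * N t) ≤ 2 * Δ k j t * Wvc L lam ε t dc (fun a b => Δ a b t) k j := by
        intro k hk j hj
        have := Wvc_bound hL hL2 hlamPos hlamSum hεp hdc2 hy0 ht.1.le ht.2.le
          (fun a b => Δ a b t) hk hj
        simpa only [hN, hKu] using this
      calc -(K * N t)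
          = ∑ _k ∈ L, ∑ _j ∈ Finset.Icc 1 (dc - 1), -(Ku * N t) := by
            rw [Finset.sum_const, Finset.sum_const, nsmul_eq_mul, nsmul_eq_mul, hK]
            ring
        _ ≤ _ := by
            apply sum_le_sum
            intro k hk
            apply sum_le_sum
            intro j hj
            exact hb k hk j hj
  have h0 := gronwall_zero N K y0 hy01 hNcont hNder hNnn hN1
  have hsq : (Δ k0 j0 y0) ^ 2 = 0 := by
    have h1 : ∑ j ∈ Finset.Icc 1 (dc - 1), (Δ k0 j y0) ^ 2 = 0 := by
      have := (Finset.sum_eq_zero_iff_of_nonneg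
        (fun i (_ : i ∈ L) => Finset.sum_nonneg fun j _ => sq_nonneg (Δ i j y0))).mp h0
      exact this k0 hk0
    exact (Finset.sum_eq_zero_iff_of_nonneg
      (fun j (_ : j ∈ Finset.Icc 1 (dc - 1)) => sq_nonneg (Δ k0 j y0))).mp h1 j0 hj0
  have : Δ k0 j0 y0 = 0 := pow_eq_zero_iff (two_ne_zero) |>.mp hsq
  simp only [hΔ] at this
  linarith

end VCU2

theorem statement_1
    (L R : Finset ℕ) (hL : L.Nonempty) (hR : R.Nonempty)
    (hL2 : ∀ k ∈ L, 2 ≤ k) (hR2 : ∀ k ∈ R, 2 ≤ k)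
    (lam rho : ℕ → ℝ)
    (hlamPos : ∀ k ∈ L, 0 < lam k) (hlamSum : ∑ k ∈ L, lam k = 1)
    (hrhoPos : ∀ k ∈ R, 0 < rho k) (hrhoSum : ∑ k ∈ R, rho k = 1)
    (ε : ℝ) (hε : ε ∈ Set.Ioo (0 : ℝ) 1)
    (dc : ℕ) (hdc : dc = R.max' hR)
    (δll : ℕ → ℕ → ℝ → ℝ) (hvv : CEvv L lam ε δll)
    (δlr : ℕ → ℕ → ℝ → ℝ) (hvc : CEvc L R lam rho ε dc δll δlr) :
    ∀ s ∈ L, ∀ j ∈ Finset.Icc 1 (dc - 1), ∀ y ∈ Set.Ioc (0 : ℝ) 1,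
      δlr s j y =
        (Ff L lam ε y * ((s : ℝ) * lhat lam ε s y / eF L lam ε y) - ε * lhat lam ε s y * (y ^ s - 1)) *
            ((xD L lam ε y / xF L lam ε y) * Gf L R lam rho ε dc j y - (if j = 1 then (1 : ℝ) else 0))
        - ((s : ℝ) * lhat lam ε s y / eF L lam ε y) * Gf L R lam rho ε dc j y *
            ((Fd L lam ε y + xF L lam ε y) / 2 - ε * xF L lam ε y * y ^ s) := by
  intro s hs j hj y hy
  have hdcR : ∀ i ∈ R, i ≤ dc := fun i hi => hdc ▸ Finset.le_max' R i hi
  have hdc2 : 2 ≤ dc := hdc ▸ hR2 _ (R.max'_mem hR)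
  have h := vc_unique hL hL2 hlamPos hlamSum hR2 hrhoSum hdcR hdc2 hε.1 hε.2
    hvv hvc s hs j hj y hy
  rw [h]
  rfl

end LDPC
end

section
/- Under the variable–variable block of covariance evolution with its initial conditions, for all y ∈ (0,1] one has Σ_{k∈L} Σ_{s∈L} δ^{l_k,l_s}(y)/(k s) = ε ε̃ Σ_{i∈L} λ_i/i. (Lemma 1, equation (9).) -/
open Finset

namespace LDPC

/-- constancy on Ioc 0 1 from zero derivative within -/
lemma constOn_Ioc (f : ℝ → ℝ)
    (hf : ∀ x ∈ Set.Ioc (0:ℝ) 1, HasDerivWithinAt f 0 (Set.Ioc (0:ℝ) 1) x)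
    {y : ℝ} (hy : y ∈ Set.Ioc (0:ℝ) 1) : f y = f 1 := by
  have h1 : (1:ℝ) ∈ Set.Ioc (0:ℝ) 1 := by norm_num
  have h := Convex.norm_image_sub_le_of_norm_hasDerivWithin_le
    (f' := fun _ => (0:ℝ)) (C := 0) hf (fun x _ => by simp) (convex_Ioc 0 1) h1 hy
  rw [zero_mul] at h
  have h0 : ‖f y - f 1‖ = 0 := le_antisymm h (norm_nonneg _)
  have := norm_eq_zero.mp h0
  linarith

/-- the main algebraic identity: the double sum of the CE drift+forcing, weighted by 1/(ks),
vanishes, given Σ lhat = e and symmetry of δ. -/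
lemma key_sum (L : Finset ℕ) (hL2 : ∀ k ∈ L, 2 ≤ k) (X E : ℝ) (hE : E ≠ 0)
    (Lh : ℕ → ℝ) (d : ℕ → ℕ → ℝ)
    (hlh : ∑ t ∈ L, Lh t = E)
    (hsym : ∀ k ∈ L, ∀ s ∈ L, d k s = d s k) :
    ∑ k ∈ L, ∑ s ∈ L,
      (-X * (((s:ℝ) * Lh s / E ^ 2) * ∑ t ∈ L, d k t
          + ((k:ℝ) * Lh k / E ^ 2) * ∑ t ∈ L, d s t
          - (((k:ℝ) + (s:ℝ)) / E) * d k s)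
        - X * (k:ℝ) * (s:ℝ) * (Lh k / E) * ((if k = s then (1:ℝ) else 0) - Lh s / E))
        / ((k:ℝ) * (s:ℝ)) = 0 := by
  have inner : ∀ k ∈ L, (∑ s ∈ L,
      (-X * (((s:ℝ) * Lh s / E ^ 2) * ∑ t ∈ L, d k t
          + ((k:ℝ) * Lh k / E ^ 2) * ∑ t ∈ L, d s t
          - (((k:ℝ) + (s:ℝ)) / E) * d k s)
        - X * (k:ℝ) * (s:ℝ) * (Lh k / E) * ((if k = s then (1:ℝ) else 0) - Lh s / E))
        / ((k:ℝ) * (s:ℝ)))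
      = (X / E) * (∑ s ∈ L, d k s / (s:ℝ))
        - (X / E ^ 2 * ∑ s ∈ L, (∑ t ∈ L, d s t) / (s:ℝ)) * Lh k := by
    intro k hk
    have hk0 : (k:ℝ) ≠ 0 := by
      have := hL2 k hk; positivity
    have point : ∀ s ∈ L,
        (-X * (((s:ℝ) * Lh s / E ^ 2) * ∑ t ∈ L, d k t
            + ((k:ℝ) * Lh k / E ^ 2) * ∑ t ∈ L, d s t
            - (((k:ℝ) + (s:ℝ)) / E) * d k s)
          - X * (k:ℝ) * (s:ℝ) * (Lh k / E) * ((if k = s then (1:ℝ) else 0) - Lh s / E))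
          / ((k:ℝ) * (s:ℝ))
        = Lh s * (-(X / E ^ 2) * ((∑ t ∈ L, d k t) / (k:ℝ)) + (X / E ^ 2) * Lh k)
          + (-(X / E ^ 2) * Lh k) * ((∑ t ∈ L, d s t) / (s:ℝ))
          + (X / E) * (d k s / (s:ℝ))
          + (X / (E * (k:ℝ))) * d k s
          + (if k = s then -(X * Lh k / E) else 0) := by
      intro s hs
      have hs0 : (s:ℝ) ≠ 0 := by
        have := hL2 s hs; positivity
      split_ifs with h
      · subst h; field_simp; ring
      · field_simp; ring
    rw [Finset.sum_congr rfl point]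
    rw [Finset.sum_add_distrib, Finset.sum_add_distrib, Finset.sum_add_distrib,
      Finset.sum_add_distrib, ← Finset.sum_mul, ← Finset.mul_sum, ← Finset.mul_sum,
      ← Finset.mul_sum, Finset.sum_ite_eq, if_pos hk, hlh]
    field_simp
    ring
  rw [Finset.sum_congr rfl inner, Finset.sum_sub_distrib, ← Finset.mul_sum, ← Finset.mul_sum,
    hlh]
  have hQ : ∑ k ∈ L, ∑ s ∈ L, d k s / (s:ℝ) = ∑ s ∈ L, (∑ t ∈ L, d s t) / (s:ℝ) := by
    rw [Finset.sum_comm]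
    refine Finset.sum_congr rfl fun s hs => ?_
    rw [← Finset.sum_div]
    congr 1
    exact Finset.sum_congr rfl fun k hk => hsym k hk s hs
  rw [hQ]
  field_simp
  ring


theorem statement_3
    (L R : Finset ℕ) (hL : L.Nonempty) (hR : R.Nonempty)
    (hL2 : ∀ k ∈ L, 2 ≤ k) (hR2 : ∀ k ∈ R, 2 ≤ k)
    (lam rho : ℕ → ℝ)
    (hlamPos : ∀ k ∈ L, 0 < lam k) (hlamSum : ∑ k ∈ L, lam k = 1)
    (hrhoPos : ∀ k ∈ R, 0 < rho k) (hrhoSum : ∑ k ∈ R, rho k = 1)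
    (ε : ℝ) (hε : ε ∈ Set.Ioo (0 : ℝ) 1)
    (δll : ℕ → ℕ → ℝ → ℝ) (hvv : CEvv L lam ε δll) :
    ∀ y ∈ Set.Ioc (0 : ℝ) 1,
      (∑ k ∈ L, ∑ s ∈ L, δll k s y / ((k : ℝ) * (s : ℝ))) =
        ε * (1 - ε) * ∑ i ∈ L, lam i / (i : ℝ) := by
  obtain ⟨hvd, hv0⟩ := hvv
  -- positivity of x
  have hXpos : ∀ z ∈ Set.Ioc (0:ℝ) 1, 0 < xF L lam ε z := by
    intro z hz
    unfold xF lamP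
    refine mul_pos hε.1 (Finset.sum_pos (fun k hk => ?_) hL)
    exact mul_pos (hlamPos k hk) (pow_pos hz.1 _)
  -- Σ lhat = e
  have hlh : ∀ z : ℝ, ∑ t ∈ L, lhat lam ε t z = eF L lam ε z := by
    intro z
    unfold eF xF lamP lhat
    rw [Finset.mul_sum, Finset.sum_mul]
    refine Finset.sum_congr rfl fun t ht => ?_
    have h2 : 2 ≤ t := hL2 t ht
    have hzp : z ^ t = z ^ (t-1) * z := by
      rw [← pow_succ]; congr 1; omega
    rw [hzp]; ring
  -- symmetry of δll on Ioc
  have hsym : ∀ k ∈ L, ∀ s ∈ L, ∀ z ∈ Set.Ioc (0:ℝ) 1, δll k s z = δll s k z := by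
    intro k hk s hs
    by_cases hks : k = s
    · subst hks; intro z _; rfl
    intro z hz
    -- derivative of the antisymmetric part
    have hfd : ∀ w ∈ Set.Ioc (0:ℝ) 1,
        HasDerivWithinAt (fun u => δll k s u - δll s k u)
          ((((k:ℝ) + (s:ℝ)) / w) * (δll k s w - δll s k w)) (Set.Ioc (0:ℝ) 1) w := by
      intro w hw
      have h := (hvd k hk s hs w hw).sub (hvd s hs k hk w hw)
      refine h.congr_deriv ?_
      have hw0 : w ≠ 0 := ne_of_gt hw.1
      have hX0 : xF L lam ε w ≠ 0 := ne_of_gt (hXpos w hw)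
      have hE : eF L lam ε w = xF L lam ε w * w := rfl
      rw [if_neg hks, if_neg (Ne.symm hks), hE]
      field_simp
      ring
    -- the rescaled antisymmetric part has zero derivative
    have hn1 : 1 ≤ k + s := by have := hL2 k hk; omega
    have hgd : ∀ w ∈ Set.Ioc (0:ℝ) 1,
        HasDerivWithinAt (fun u => (δll k s u - δll s k u) / u ^ (k + s))
          0 (Set.Ioc (0:ℝ) 1) w := by
      intro w hw
      have hw0 : w ≠ 0 := ne_of_gt hw.1
      have h := (hfd w hw).div (hasDerivWithinAt_pow (k+s) w (s := Set.Ioc (0:ℝ) 1))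
        (pow_ne_zero _ hw0)
      refine h.congr_deriv ?_
      have hwp : w ^ (k + s) = w ^ (k + s - 1) * w := by
        rw [← pow_succ]; congr 1; omega
      rw [hwp]
      push_cast
      field_simp
      ring
    have hconst := constOn_Ioc _ hgd hz
    have h10 : δll k s 1 - δll s k 1 = 0 := by
      rw [hv0 k hk s hs, hv0 s hs k hk, if_neg hks, if_neg (Ne.symm hks)]
      ring
    rw [show ((1:ℝ) ^ (k+s)) = 1 from one_pow _] at hconst
    rw [h10] at hconst
    have hz0 : z ≠ 0 := ne_of_gt hz.1
    have : δll k s z - δll s k z = 0 := by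
      have := hconst
      rw [zero_div] at this
      exact (div_eq_zero_iff.mp this).resolve_right (pow_ne_zero _ hz0)
    linarith
  -- the weighted double sum has zero derivative
  have hSd : ∀ z ∈ Set.Ioc (0:ℝ) 1,
      HasDerivWithinAt (fun u => ∑ k ∈ L, ∑ s ∈ L, δll k s u / ((k : ℝ) * (s : ℝ)))
        0 (Set.Ioc (0:ℝ) 1) z := by
    intro z hz
    have hX0 : xF L lam ε z ≠ 0 := ne_of_gt (hXpos z hz)
    have hE0 : eF L lam ε z ≠ 0 := by
      have : eF L lam ε z = xF L lam ε z * z := rfl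
      rw [this]
      exact mul_ne_zero hX0 (ne_of_gt hz.1)
    have h := HasDerivWithinAt.fun_sum (u := L)
      (fun k hk => HasDerivWithinAt.fun_sum (u := L)
        (fun s hs => (hvd k hk s hs z hz).div_const ((k:ℝ) * (s:ℝ))))
    refine h.congr_deriv ?_
    exact (key_sum L hL2 (xF L lam ε z) (eF L lam ε z) hE0 (fun t => lhat lam ε t z)
      (fun k s => δll k s z) (hlh z) (fun k hk s hs => hsym k hk s hs z hz))
  intro y hy
  have hconst := constOn_Ioc _ hSd hy
  rw [hconst]
  -- evaluate at 1
  have hval : ∀ k ∈ L, (∑ s ∈ L, δll k s 1 / ((k : ℝ) * (s : ℝ)))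
      = ε * (1 - ε) * (lam k / (k:ℝ)) := by
    intro k hk
    have hk0 : (k:ℝ) ≠ 0 := by have := hL2 k hk; positivity
    have point : ∀ s ∈ L, δll k s 1 / ((k : ℝ) * (s : ℝ))
        = (if k = s then ((k:ℝ) * lam k * ε * (1 - ε)) / ((k:ℝ) * (s:ℝ)) else 0) := by
      intro s hs
      rw [hv0 k hk s hs]
      split_ifs with h
      · ring
      · simp
    rw [Finset.sum_congr rfl point, Finset.sum_ite_eq, if_pos hk]
    field_simp
  rw [Finset.sum_congr rfl hval, ← Finset.mul_sum]


end LDPC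
end

section
/- Under the variable–variable block of covariance evolution with its initial conditions, for all k, s ∈ L and all y ∈ (0,1] one has 2 δ^{l_k,l_s}/(k s l̂_k l̂_s) − δ^{l_k,l_k}/(k l̂_k)² − δ^{l_s,l_s}/(s l̂_s)² = [(ε y^k − 1)/(k l̂_k) + (ε y^s − 1)/(s l̂_s)] · 1_{k≠s}. (Lemma 1, equation (10).) -/
open Finset

namespace LDPC

private lemma hasDerivAt_pow' (a : ℕ) (y : ℝ) (hy : y ≠ 0) :
    HasDerivAt (fun t : ℝ => t ^ a) ((a : ℝ) * y ^ a / y) y := by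
  have h := hasDerivAt_pow a y
  have hv : (a : ℝ) * y ^ (a - 1) = (a : ℝ) * y ^ a / y := by
    rcases Nat.eq_zero_or_pos a with h0 | h0
    · subst h0; simp
    · rw [eq_div_iff hy, mul_assoc, ← pow_succ]
      congr 2
      omega
  rwa [hv] at h

private lemma hasDerivAt_lhat (lam : ℕ → ℝ) (ε : ℝ) (a : ℕ) (y : ℝ) (hy : y ≠ 0) :
    HasDerivAt (fun t => lhat lam ε a t) ((a : ℝ) * lhat lam ε a y / y) y := by
  have h := (hasDerivAt_pow' a y hy).const_mul (ε * lam a)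
  have hv : ε * lam a * ((a : ℝ) * y ^ a / y) = (a : ℝ) * lhat lam ε a y / y := by
    simp only [lhat]; ring
  rw [hv] at h
  exact h

set_option maxHeartbeats 4000000 in
theorem statement_4
    (L R : Finset ℕ) (hL : L.Nonempty) (hR : R.Nonempty)
    (hL2 : ∀ k ∈ L, 2 ≤ k) (hR2 : ∀ k ∈ R, 2 ≤ k)
    (lam rho : ℕ → ℝ)
    (hlamPos : ∀ k ∈ L, 0 < lam k) (hlamSum : ∑ k ∈ L, lam k = 1)
    (hrhoPos : ∀ k ∈ R, 0 < rho k) (hrhoSum : ∑ k ∈ R, rho k = 1)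
    (ε : ℝ) (hε : ε ∈ Set.Ioo (0 : ℝ) 1)
    (δll : ℕ → ℕ → ℝ → ℝ) (hvv : CEvv L lam ε δll) :
    ∀ k ∈ L, ∀ s ∈ L, ∀ y ∈ Set.Ioc (0 : ℝ) 1,
      2 * δll k s y / ((k : ℝ) * (s : ℝ) * lhat lam ε k y * lhat lam ε s y)
        - δll k k y / ((k : ℝ) * lhat lam ε k y) ^ 2
        - δll s s y / ((s : ℝ) * lhat lam ε s y) ^ 2 =
        ((ε * y ^ k - 1) / ((k : ℝ) * lhat lam ε k y)
          + (ε * y ^ s - 1) / ((s : ℝ) * lhat lam ε s y)) *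
          (if k = s then (0 : ℝ) else 1) := by
  intro k hk s hs y hy
  by_cases hks : k = s
  · subst hks
    rw [if_pos rfl, mul_zero]
    ring
  · rw [if_neg hks, mul_one]
    obtain ⟨hde, hinit⟩ := hvv
    have hε0 : (0:ℝ) < ε := hε.1
    have hεne : ε ≠ 0 := ne_of_gt hε0
    have hk2 := hL2 k hk
    have hs2 := hL2 s hs
    have hkpos : (0:ℝ) < (k:ℝ) := by exact_mod_cast (by omega : 0 < k)
    have hspos : (0:ℝ) < (s:ℝ) := by exact_mod_cast (by omega : 0 < s)
    have hlamk := hlamPos k hk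
    have hlams := hlamPos s hs
    -- the key function
    set Φ : ℝ → ℝ := fun t =>
      2 * δll k s t / ((k : ℝ) * (s : ℝ) * lhat lam ε k t * lhat lam ε s t)
        - δll k k t / ((k : ℝ) * lhat lam ε k t) ^ 2
        - δll s s t / ((s : ℝ) * lhat lam ε s t) ^ 2
        - ((ε * t ^ k - 1) / ((k : ℝ) * lhat lam ε k t)
            + (ε * t ^ s - 1) / ((s : ℝ) * lhat lam ε s t)) with hΦ
    have key : ∀ z ∈ Set.Ioc (0:ℝ) 1, HasDerivWithinAt Φ 0 (Set.Ioc (0:ℝ) 1) z := by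
      intro z hz
      have hz0 : 0 < z := hz.1
      have hzne : z ≠ 0 := ne_of_gt hz0
      have hlhk : 0 < lhat lam ε k z := by
        simp only [lhat]; exact mul_pos (mul_pos hε0 hlamk) (pow_pos hz0 k)
      have hlhs : 0 < lhat lam ε s z := by
        simp only [lhat]; exact mul_pos (mul_pos hε0 hlams) (pow_pos hz0 s)
      have hP : 0 < lamP L lam z :=
        Finset.sum_pos (fun i hi => mul_pos (hlamPos i hi) (pow_pos hz0 _)) hL
      have hne1 : (k:ℝ) * (s:ℝ) * lhat lam ε k z * lhat lam ε s z ≠ 0 :=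
        ne_of_gt (mul_pos (mul_pos (mul_pos hkpos hspos) hlhk) hlhs)
      have hne2 : ((k:ℝ) * lhat lam ε k z) ^ 2 ≠ 0 :=
        pow_ne_zero _ (ne_of_gt (mul_pos hkpos hlhk))
      have hne3 : ((s:ℝ) * lhat lam ε s z) ^ 2 ≠ 0 :=
        pow_ne_zero _ (ne_of_gt (mul_pos hspos hlhs))
      have hnek : (k:ℝ) * lhat lam ε k z ≠ 0 := ne_of_gt (mul_pos hkpos hlhk)
      have hnes : (s:ℝ) * lhat lam ε s z ≠ 0 := ne_of_gt (mul_pos hspos hlhs)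
      have hDks := hde k hk s hs z hz
      have hDkk := hde k hk k hk z hz
      have hDss := hde s hs s hs z hz
      have hlk := hasDerivAt_lhat lam ε k z hzne
      have hls := hasDerivAt_lhat lam ε s z hzne
      have hg1 := (hlk.const_mul ((k:ℝ) * (s:ℝ))).mul hls
      have hg2 := (hlk.const_mul (k:ℝ)).pow 2
      have hg3 := (hls.const_mul (s:ℝ)).pow 2
      have hT1 := (hDks.const_mul (2:ℝ)).div hg1.hasDerivWithinAt hne1
      have hT2 := hDkk.div hg2.hasDerivWithinAt hne2
      have hT3 := hDss.div hg3.hasDerivWithinAt hne3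
      have hnk := ((hasDerivAt_pow' k z hzne).const_mul ε).sub_const 1
      have hns := ((hasDerivAt_pow' s z hzne).const_mul ε).sub_const 1
      have hR1 := hnk.div (hlk.const_mul (k:ℝ)) hnek
      have hR2 := hns.div (hls.const_mul (s:ℝ)) hnes
      have hcomb := ((hT1.sub hT2).sub hT3).sub (hR1.add hR2).hasDerivWithinAt
      refine hcomb.congr_deriv ?_
      symm
      simp only [eF, xF, lhat, if_neg hks, if_pos rfl, Pi.mul_apply, Pi.pow_apply, Nat.cast_ofNat, eq_self_iff_true, if_true]
      have hYk0 : z ^ k ≠ 0 := pow_ne_zero _ hzne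
      have hYs0 : z ^ s ≠ 0 := pow_ne_zero _ hzne
      have hPne : lamP L lam z ≠ 0 := ne_of_gt hP
      have hkne : (k:ℝ) ≠ 0 := ne_of_gt hkpos
      have hsne : (s:ℝ) ≠ 0 := ne_of_gt hspos
      have hlamk' : lam k ≠ 0 := ne_of_gt hlamk
      have hlams' : lam s ≠ 0 := ne_of_gt hlams
      field_simp [hzne, hεne, hYk0, hYs0, hPne, hkne, hsne, hlamk', hlams']
      ring
    have h1mem : (1:ℝ) ∈ Set.Ioc (0:ℝ) 1 := ⟨one_pos, le_refl 1⟩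
    have hconst : Φ y = Φ 1 := by
      refine (convex_Ioc (0:ℝ) 1).is_const_of_fderivWithin_eq_zero
        (fun z hz => (key z hz).differentiableWithinAt) (fun z hz => ?_) hy h1mem
      have := (key z hz).hasFDerivWithinAt.fderivWithin (uniqueDiffOn_Ioc 0 1 z hz)
      rw [this]
      ext t
      simp
    have hΦ1 : Φ 1 = 0 := by
      have e1 := hinit k hk s hs
      have e2 := hinit k hk k hk
      have e3 := hinit s hs s hs
      rw [if_neg hks] at e1
      rw [if_pos rfl] at e2 e3
      simp only [hΦ, lhat, one_pow, mul_one, e1, e2, e3]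
      have hεne1 : (1:ℝ) - ε ≠ 0 := by
        have := hε.2; intro h; nlinarith
      field_simp
      ring
    have hΦy : Φ y = 0 := hconst.trans hΦ1
    simp only [hΦ] at hΦy
    linarith [hΦy]


end LDPC
end
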